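/- arXiv:math/9612206 — 3 statements merged into one kernel-verified Lean document; each statement's English description precedes it below -/
import Mathlib

section
/- Let G = ⟨𝒜 ∣ ℛ⟩ and let H be the subgroup generated by ℬ ⊆ 𝒜. If v is an injective word in the generators 𝒜 that represents an element h ∈ H, then for all m ∈ ℕ, with respect to the presentation ⟨𝒜, τ ∣ ℛ, [τ, b] = 1 ∀ b ∈ ℬ⟩, one has m·d_ℬ(1, h) ≤ Area(v τ^m v⁻¹ τ⁻m), where d_ℬ is the word metric on H with respect to the generating set ℬ. -/
open scoped commutatorElement

/-! # Common definitions: words, presentations, area, Dehn functions,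
isodiametric functions, word metrics and distortion. -/

section Core

variable {A : Type*} [DecidableEq A]

/-- A word (element of the free group) is *null-homotopic* with respect to a set of
relators `R` if it lies in the normal closure of `R`, i.e. represents the identity
of the presented group. -/
def NullHomotopic (R : Set (FreeGroup A)) (w : FreeGroup A) : Prop :=
  w ∈ Subgroup.normalClosure R

/-- `areaOf R w` is the least `N` such that `w` can be written in the free group as a
product of `N` conjugates of elements of `R ∪ R⁻¹`. -/
noncomputable def areaOf (R : Set (FreeGroup A)) (w : FreeGroup A) : ℕ :=
  sInf {N : ℕ | ∃ g r : Fin N → FreeGroup A,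
    (∀ i, r i ∈ R ∨ (r i)⁻¹ ∈ R) ∧
    w = (List.ofFn fun i => (g i)⁻¹ * r i * g i).prod}

/-- The Dehn function of the presentation with relators `R`. -/
noncomputable def dehn (R : Set (FreeGroup A)) (n : ℕ) : ℕ :=
  sSup {a : ℕ | ∃ w : FreeGroup A, NullHomotopic R w ∧ w.norm ≤ n ∧ areaOf R w = a}

/-- `diamOf R w` is the minimum over all expressions of `w` as a product of conjugates
`gᵢ⁻¹ rᵢ gᵢ` of relators of the maximal length of the conjugating elements `gᵢ`. -/
noncomputable def diamOf (R : Set (FreeGroup A)) (w : FreeGroup A) : ℕ :=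
  sInf {D : ℕ | ∃ (N : ℕ) (g r : Fin N → FreeGroup A),
    (∀ i, r i ∈ R ∨ (r i)⁻¹ ∈ R) ∧
    w = (List.ofFn fun i => (g i)⁻¹ * r i * g i).prod ∧
    ∀ i, (g i).norm ≤ D}

/-- The isodiametric function of the presentation with relators `R`. -/
noncomputable def isodiam (R : Set (FreeGroup A)) (n : ℕ) : ℕ :=
  sSup {d : ℕ | ∃ w : FreeGroup A, NullHomotopic R w ∧ w.norm ≤ n ∧ diamOf R w = d}

/-- The word norm `d(1,g)` of `g` with respect to the marking `π` of the group `G` by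
the free group on `A`: the least length of a word in the alphabet representing `g`. -/
noncomputable def wordNorm {G : Type*} [Group G] (π : FreeGroup A →* G) (g : G) : ℕ :=
  sInf {n : ℕ | ∃ w : FreeGroup A, π w = g ∧ w.norm = n}

/-- The word metric distance `d(1,g)` in the group presented by `R`, with respect to the
images of the generators `A`. -/
noncomputable def gDist (R : Set (FreeGroup A)) (g : PresentedGroup R) : ℕ :=
  wordNorm (PresentedGroup.mk R) g

/-- The subgroup of the group presented by `R` generated by the images of `B ⊆ A`. -/
def Hsub (R : Set (FreeGroup A)) (B : Set A) : Subgroup (PresentedGroup R) :=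
  Subgroup.closure (PresentedGroup.mk R '' (FreeGroup.of '' B))

/-- The word metric distance `d_B(1,g)` on the subgroup generated by `B ⊆ A`:
the least length of a word in the letters of `B` representing `g`. -/
noncomputable def subDist (R : Set (FreeGroup A)) (B : Set A) (g : PresentedGroup R) : ℕ :=
  wordNorm ((PresentedGroup.mk R).comp (FreeGroup.map (Subtype.val : B → A))) g

/-- The distortion function `δ(n) = (1/n) · max { d_B(1,h) : h ∈ ⟨B⟩, d(1,h) ≤ n }` of the
subgroup generated by `B ⊆ A` in the group presented by `R`. -/
noncomputable def distortion (R : Set (FreeGroup A)) (B : Set A) (n : ℕ) : ℕ :=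
  (sSup {m : ℕ | ∃ g : PresentedGroup R, g ∈ Hsub R B ∧ gDist R g ≤ n ∧ subDist R B g = m}) / n

/-- `Preceq g f` (`g ⪯ f`): there are positive constants `A B C` with
`g n ≤ A * f (B*n + C)` for all `n`. -/
def Preceq (g f : ℕ → ℕ) : Prop :=
  ∃ A B C : ℕ, 0 < A ∧ 0 < B ∧ 0 < C ∧ ∀ n, g n ≤ A * f (B * n + C)

/-- `SimEq f g` (`f ≃ g`): mutual domination. -/
def SimEq (f g : ℕ → ℕ) : Prop := Preceq f g ∧ Preceq g f

/-- The function `n ↦ ⌈n^r⌉` for a real exponent `r`. -/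
noncomputable def npow (r : ℝ) : ℕ → ℕ := fun n => ⌈(n : ℝ) ^ r⌉₊

/-- A word `v` is *injective* if no non-empty subword of (the reduced word of) `v`
is null-homotopic. -/
def InjectiveWord (R : Set (FreeGroup A)) (v : FreeGroup A) : Prop :=
  ∀ p u s : List (A × Bool), v.toWord = p ++ u ++ s → u ≠ [] →
    ¬ NullHomotopic R (FreeGroup.mk u)

/-- Relators for the HNN extension `⟨A, τ ∣ R, [τ,b] = 1 ∀ b ∈ B⟩`, with
`τ` the letter `none` and `A` embedded via `some`. -/
def HNNRels (R : Set (FreeGroup A)) (B : Set A) : Set (FreeGroup (Option A)) :=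
  (FreeGroup.map some '' R) ∪
  {r | ∃ b ∈ B, r = ⁅FreeGroup.of (none : Option A), FreeGroup.of (some b)⁆}

variable {A' : Type*} [DecidableEq A']

/-- Relators of the cartesian product of the presentations `⟨A ∣ R⟩` and `⟨A' ∣ R'⟩`. -/
def ProdRels (R : Set (FreeGroup A)) (R' : Set (FreeGroup A')) :
    Set (FreeGroup (A ⊕ A')) :=
  (FreeGroup.map Sum.inl '' R) ∪ (FreeGroup.map Sum.inr '' R') ∪
  {r | ∃ (x : A) (y : A'), r = ⁅FreeGroup.of (Sum.inl x : A ⊕ A'), FreeGroup.of (Sum.inr y)⁆}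

/-- Deleting all letters from `A'`. -/
def projL : FreeGroup (A ⊕ A') →* FreeGroup A :=
  FreeGroup.lift (Sum.elim FreeGroup.of fun _ => 1)

/-- Deleting all letters from `A`. -/
def projR : FreeGroup (A ⊕ A') →* FreeGroup A' :=
  FreeGroup.lift (Sum.elim (fun _ => 1) FreeGroup.of)

end Core

section Gc

/-- Generators `x_1, …, x_c, t` of `G_c`: `some i` is `x_{i+1}` and `none` is `t`. -/
abbrev GcGen (c : ℕ) := Option (Fin c)

/-- The standard relators of `G_c = ℤ^c ⋊_{φ_c} ℤ`:
`[x_i,x_j] = 1` for all `i,j`; `[x_c,t] = 1`; `[x_i,t] = x_{i+1}` for `i < c`. -/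
def GcRels (c : ℕ) : Set (FreeGroup (GcGen c)) :=
  {r | (∃ i j : Fin c, r = ⁅FreeGroup.of (some i), FreeGroup.of (some j)⁆) ∨
       (∃ i : Fin c, (i : ℕ) = c - 1 ∧
         r = ⁅FreeGroup.of (some i), FreeGroup.of (none : GcGen c)⁆) ∨
       (∃ i j : Fin c, (j : ℕ) = (i : ℕ) + 1 ∧
         r = ⁅FreeGroup.of (some i), FreeGroup.of (none : GcGen c)⁆ *
             (FreeGroup.of (some j))⁻¹)}

/-- The central generator `z_c = x_c` of `G_c` (as a word; junk value `1` if `c = 0`). -/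
def zword (c : ℕ) : FreeGroup (GcGen c) :=
  if h : 0 < c then FreeGroup.of (some ⟨c - 1, Nat.sub_lt h Nat.one_pos⟩) else 1

/-- The generator `z_c = x_c`, as a subset of the alphabet of `G_c`. -/
def Bz (c : ℕ) : Set (GcGen c) := {g | ∃ i : Fin c, (i : ℕ) = c - 1 ∧ g = some i}

/-- Relators of the amalgamated free product `G_a *_{⟨z⟩} G_b` obtained by identifying the
centre `⟨z_a⟩` of `G_a` with the centre `⟨z_b⟩` of `G_b`. -/
def AmalRels (a b : ℕ) : Set (FreeGroup (GcGen a ⊕ GcGen b)) :=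
  (FreeGroup.map Sum.inl '' GcRels a) ∪ (FreeGroup.map Sum.inr '' GcRels b) ∪
  {r | ∃ (i : Fin a) (j : Fin b), (i : ℕ) = a - 1 ∧ (j : ℕ) = b - 1 ∧
    r = FreeGroup.of (Sum.inl (some i)) * (FreeGroup.of (Sum.inr (some j)))⁻¹}

end Gc

section Gamma

/-- Generators of presentation 2.2 of `Γ(a,b,c)`:
`x_1,…,x_{a−1}, z, t_a, y_1,…,y_{b−1}, t_b, u_1,…,u_{c−1}, ζ, t_c`. -/
inductive GammaGen (a b c : ℕ) where
  | x (i : Fin (a - 1)) : GammaGen a b c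
  | z : GammaGen a b c
  | ta : GammaGen a b c
  | y (i : Fin (b - 1)) : GammaGen a b c
  | tb : GammaGen a b c
  | u (i : Fin (c - 1)) : GammaGen a b c
  | zeta : GammaGen a b c
  | tc : GammaGen a b c
  deriving DecidableEq

/-- The relators of presentation 2.2 of
`Γ(a,b,c) = G_a *_{z_a=z_b} (G_b × ⟨ζ⟩) *_{ζ=z_c} G_c`. -/
def GammaRels (a b c : ℕ) : Set (FreeGroup (GammaGen a b c)) :=
  let X : Fin (a - 1) → FreeGroup (GammaGen a b c) := fun i => FreeGroup.of (GammaGen.x i)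
  let Y : Fin (b - 1) → FreeGroup (GammaGen a b c) := fun i => FreeGroup.of (GammaGen.y i)
  let U : Fin (c - 1) → FreeGroup (GammaGen a b c) := fun i => FreeGroup.of (GammaGen.u i)
  let Z : FreeGroup (GammaGen a b c) := FreeGroup.of GammaGen.z
  let Ze : FreeGroup (GammaGen a b c) := FreeGroup.of GammaGen.zeta
  let Ta : FreeGroup (GammaGen a b c) := FreeGroup.of GammaGen.ta
  let Tb : FreeGroup (GammaGen a b c) := FreeGroup.of GammaGen.tb
  let Tc : FreeGroup (GammaGen a b c) := FreeGroup.of GammaGen.tc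
  {r | -- the relators ℛ_a
       (∃ i, r = ⁅Z, X i⁆) ∨ (∃ i j, r = ⁅X i, X j⁆) ∨ r = ⁅Z, Ta⁆ ∨
       (∃ i j : Fin (a - 1), (j : ℕ) = (i : ℕ) + 1 ∧ r = ⁅X i, Ta⁆ * (X j)⁻¹) ∨
       (∃ i : Fin (a - 1), (i : ℕ) = a - 2 ∧ r = ⁅X i, Ta⁆ * Z⁻¹) ∨
       -- the relators ℛ_b
       (∃ i, r = ⁅Z, Y i⁆) ∨ (∃ i, r = ⁅Ze, Y i⁆) ∨ (∃ i j, r = ⁅Y i, Y j⁆) ∨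
       r = ⁅Z, Tb⁆ ∨ r = ⁅Ze, Tb⁆ ∨ r = ⁅Z, Ze⁆ ∨
       (∃ i j : Fin (b - 1), (j : ℕ) = (i : ℕ) + 1 ∧ r = ⁅Y i, Tb⁆ * (Y j)⁻¹) ∨
       (∃ i : Fin (b - 1), (i : ℕ) = b - 2 ∧ r = ⁅Y i, Tb⁆ * Z⁻¹) ∨
       -- the relators ℛ_c
       (∃ i, r = ⁅Ze, U i⁆) ∨ (∃ i j, r = ⁅U i, U j⁆) ∨ r = ⁅Ze, Tc⁆ ∨
       (∃ i j : Fin (c - 1), (j : ℕ) = (i : ℕ) + 1 ∧ r = ⁅U i, Tc⁆ * (U j)⁻¹) ∨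
       (∃ i : Fin (c - 1), (i : ℕ) = c - 2 ∧ r = ⁅U i, Tc⁆ * Ze⁻¹)}

end Gamma

section J

/-- Generators of the natural presentation of `J(a,b)`:
`𝒜_a = {x_1,…,x_{a−1}, t_a}`, `𝒜_b = {y_1,…,y_{b−1}, t_b}`, the shared central
generator `z`, and the primed copies. -/
inductive JGen (a b : ℕ) where
  | x (i : Fin (a - 1)) : JGen a b
  | ta : JGen a b
  | y (i : Fin (b - 1)) : JGen a b
  | tb : JGen a b
  | z : JGen a b
  | x' (i : Fin (a - 1)) : JGen a b
  | ta' : JGen a b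
  | y' (i : Fin (b - 1)) : JGen a b
  | tb' : JGen a b
  | z' : JGen a b
  deriving DecidableEq

/-- The subset `𝒜_b ∪ {z}` of the generators of `J(a,b)`. -/
def JBSet (a b : ℕ) : Set (JGen a b) :=
  {g | (∃ i, g = JGen.y i) ∨ g = JGen.tb ∨ g = JGen.z}

/-- The subset `𝒜'_b ∪ {z'}` of the generators of `J(a,b)`. -/
def JBSet' (a b : ℕ) : Set (JGen a b) :=
  {g | (∃ i, g = JGen.y' i) ∨ g = JGen.tb' ∨ g = JGen.z'}

/-- The subset `𝒜_a ∪ {z}` of the generators of `J(a,b)`. -/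
def JASet (a b : ℕ) : Set (JGen a b) :=
  {g | (∃ i, g = JGen.x i) ∨ g = JGen.ta ∨ g = JGen.z}

/-- Relators of the natural presentation of
`J(a,b) = G_a *_{z_a=z_b} (G_b × G'_b) *_{z'_b=z'_a} G'_a`:
the relators `𝒮_a, 𝒮_b` of `G_a, G_b`, their primed copies, and the commuting
relators `[b,b'] = 1` for `b ∈ 𝒜_b ∪ {z}`, `b' ∈ 𝒜'_b ∪ {z'}`. -/
def JRels (a b : ℕ) : Set (FreeGroup (JGen a b)) :=
  let X : Fin (a - 1) → FreeGroup (JGen a b) := fun i => FreeGroup.of (JGen.x i)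
  let Y : Fin (b - 1) → FreeGroup (JGen a b) := fun i => FreeGroup.of (JGen.y i)
  let X' : Fin (a - 1) → FreeGroup (JGen a b) := fun i => FreeGroup.of (JGen.x' i)
  let Y' : Fin (b - 1) → FreeGroup (JGen a b) := fun i => FreeGroup.of (JGen.y' i)
  let Z : FreeGroup (JGen a b) := FreeGroup.of JGen.z
  let Z' : FreeGroup (JGen a b) := FreeGroup.of JGen.z'
  let Ta : FreeGroup (JGen a b) := FreeGroup.of JGen.ta
  let Tb : FreeGroup (JGen a b) := FreeGroup.of JGen.tb
  let Ta' : FreeGroup (JGen a b) := FreeGroup.of JGen.ta'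
  let Tb' : FreeGroup (JGen a b) := FreeGroup.of JGen.tb'
  {r | -- the relators 𝒮_a
       (∃ i, r = ⁅Z, X i⁆) ∨ (∃ i j, r = ⁅X i, X j⁆) ∨ r = ⁅Z, Ta⁆ ∨
       (∃ i j : Fin (a - 1), (j : ℕ) = (i : ℕ) + 1 ∧ r = ⁅X i, Ta⁆ * (X j)⁻¹) ∨
       (∃ i : Fin (a - 1), (i : ℕ) = a - 2 ∧ r = ⁅X i, Ta⁆ * Z⁻¹) ∨
       -- the relators 𝒮_b
       (∃ i, r = ⁅Z, Y i⁆) ∨ (∃ i j, r = ⁅Y i, Y j⁆) ∨ r = ⁅Z, Tb⁆ ∨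
       (∃ i j : Fin (b - 1), (j : ℕ) = (i : ℕ) + 1 ∧ r = ⁅Y i, Tb⁆ * (Y j)⁻¹) ∨
       (∃ i : Fin (b - 1), (i : ℕ) = b - 2 ∧ r = ⁅Y i, Tb⁆ * Z⁻¹) ∨
       -- the relators 𝒮'_a
       (∃ i, r = ⁅Z', X' i⁆) ∨ (∃ i j, r = ⁅X' i, X' j⁆) ∨ r = ⁅Z', Ta'⁆ ∨
       (∃ i j : Fin (a - 1), (j : ℕ) = (i : ℕ) + 1 ∧ r = ⁅X' i, Ta'⁆ * (X' j)⁻¹) ∨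
       (∃ i : Fin (a - 1), (i : ℕ) = a - 2 ∧ r = ⁅X' i, Ta'⁆ * Z'⁻¹) ∨
       -- the relators 𝒮'_b
       (∃ i, r = ⁅Z', Y' i⁆) ∨ (∃ i j, r = ⁅Y' i, Y' j⁆) ∨ r = ⁅Z', Tb'⁆ ∨
       (∃ i j : Fin (b - 1), (j : ℕ) = (i : ℕ) + 1 ∧ r = ⁅Y' i, Tb'⁆ * (Y' j)⁻¹) ∨
       (∃ i : Fin (b - 1), (i : ℕ) = b - 2 ∧ r = ⁅Y' i, Tb'⁆ * Z'⁻¹) ∨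
       -- the commuting relators
       (∃ g ∈ JBSet a b, ∃ g' ∈ JBSet' a b,
         r = ⁅FreeGroup.of g, FreeGroup.of g'⁆)}

/-- The involution of the alphabet of `J(a,b)` exchanging each generator with its
primed copy. -/
def JPrime (a b : ℕ) : JGen a b → JGen a b
  | .x i => .x' i
  | .ta => .ta'
  | .y i => .y' i
  | .tb => .tb'
  | .z => .z'
  | .x' i => .x i
  | .ta' => .ta
  | .y' i => .y i
  | .tb' => .tb
  | .z' => .z

end J



namespace Stmt4A

/-- Decomposition of a normal closure element as product of conjugates. -/
theorem ncl_decomp {G : Type*} [Group G] {S : Set G} {w : G}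
    (hw : w ∈ Subgroup.normalClosure S) :
    ∃ L : List (G × G), (∀ p ∈ L, p.2 ∈ S ∨ p.2⁻¹ ∈ S) ∧
      w = (L.map fun p => p.1⁻¹ * p.2 * p.1).prod := by
  refine Subgroup.closure_induction
    (p := fun x _ => ∃ L : List (G × G), (∀ p ∈ L, p.2 ∈ S ∨ p.2⁻¹ ∈ S) ∧
      x = (L.map fun p => p.1⁻¹ * p.2 * p.1).prod) ?_ ?_ ?_ ?_ hw
  · intro x hx
    obtain ⟨s, hs, hconj⟩ := Group.mem_conjugatesOfSet_iff.1 hx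
    obtain ⟨c, rfl⟩ := isConj_iff.1 hconj
    exact ⟨[(c⁻¹, s)], by simpa using Or.inl hs, by simp⟩
  · exact ⟨[], by simp, by simp⟩
  · rintro x y _ _ ⟨L₁, hL₁, rfl⟩ ⟨L₂, hL₂, rfl⟩
    refine ⟨L₁ ++ L₂, ?_, by simp⟩
    intro p hp
    rcases List.mem_append.1 hp with h | h
    exacts [hL₁ p h, hL₂ p h]
  · rintro x _ ⟨L, hL, rfl⟩
    refine ⟨(L.map fun p => (p.1, p.2⁻¹)).reverse, ?_, ?_⟩
    · intro p hp
      simp only [List.mem_reverse, List.mem_map] at hp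
      obtain ⟨q, hq, rfl⟩ := hp
      rcases hL q hq with h | h
      · exact Or.inr (by simpa using h)
      · exact Or.inl h
    · rw [List.prod_inv_reverse]
      simp only [List.map_reverse, List.map_map]
      refine congrArg List.prod (congrArg List.reverse
        (List.map_congr_left fun p _ => ?_))
      simp [mul_assoc]


section AffPart
@[ext]
structure Aff (G : Type) [Group G] where
  g : G
  a : MonoidAlgebra ℤ G

namespace Aff

variable {G : Type} [Group G]

noncomputable instance : Mul (Aff G) :=
  ⟨fun x y => ⟨x.g * y.g, x.a + MonoidAlgebra.single x.g 1 * y.a⟩⟩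

noncomputable instance : One (Aff G) := ⟨⟨1, 0⟩⟩

noncomputable instance : Inv (Aff G) :=
  ⟨fun x => ⟨x.g⁻¹, -(MonoidAlgebra.single x.g⁻¹ 1 * x.a)⟩⟩

theorem mul_def (x y : Aff G) :
    x * y = ⟨x.g * y.g, x.a + MonoidAlgebra.single x.g 1 * y.a⟩ := rfl

theorem one_def : (1 : Aff G) = ⟨1, 0⟩ := rfl

theorem inv_def (x : Aff G) :
    x⁻¹ = ⟨x.g⁻¹, -(MonoidAlgebra.single x.g⁻¹ 1 * x.a)⟩ := rfl

theorem single_one_eq : (MonoidAlgebra.single (1 : G) (1 : ℤ)) = 1 :=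
  (MonoidAlgebra.one_def).symm

noncomputable instance : Group (Aff G) where
  mul_assoc x y z := by
    refine Aff.ext (mul_assoc ..) ?_
    show (x.a + MonoidAlgebra.single x.g 1 * y.a) +
        MonoidAlgebra.single (x.g * y.g) 1 * z.a =
      x.a + MonoidAlgebra.single x.g 1 *
        (y.a + MonoidAlgebra.single y.g 1 * z.a)
    rw [mul_add, ← mul_assoc, MonoidAlgebra.single_mul_single, one_mul, add_assoc]
  one_mul x := by
    refine Aff.ext (one_mul _) ?_
    show (0 : MonoidAlgebra ℤ G) + MonoidAlgebra.single 1 1 * x.a = x.a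
    rw [single_one_eq, one_mul, zero_add]
  mul_one x := by
    refine Aff.ext (mul_one _) ?_
    show x.a + MonoidAlgebra.single x.g 1 * 0 = x.a
    rw [mul_zero, add_zero]
  inv_mul_cancel x := by
    refine Aff.ext (inv_mul_cancel _) ?_
    show -(MonoidAlgebra.single x.g⁻¹ 1 * x.a) +
        MonoidAlgebra.single x.g⁻¹ 1 * x.a = 0
    exact neg_add_cancel _

theorem conj_calc (x y : Aff G) (hy : y.g = 1) :
    x⁻¹ * y * x = ⟨1, MonoidAlgebra.single x.g⁻¹ 1 * y.a⟩ := by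
  rw [inv_def, mul_def, mul_def]
  refine Aff.ext ?_ ?_
  · show x.g⁻¹ * y.g * x.g = 1
    rw [hy, mul_one, inv_mul_cancel]
  · show (-(MonoidAlgebra.single x.g⁻¹ 1 * x.a) + MonoidAlgebra.single x.g⁻¹ 1 * y.a) +
        MonoidAlgebra.single (x.g⁻¹ * y.g) 1 * x.a = MonoidAlgebra.single x.g⁻¹ 1 * y.a
    rw [hy, mul_one]
    abel

theorem inv_of_g_one (x : Aff G) (hx : x.g = 1) : x⁻¹ = ⟨1, -x.a⟩ := by
  rw [inv_def, hx]
  refine Aff.ext inv_one ?_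
  show -(MonoidAlgebra.single (1:G)⁻¹ 1 * x.a) = -x.a
  rw [inv_one, single_one_eq, one_mul]

theorem pow_one_one (m : ℕ) :
    (⟨1, 1⟩ : Aff G) ^ m = ⟨1, m • (1 : MonoidAlgebra ℤ G)⟩ := by
  induction m with
  | zero => simp [one_def]
  | succ k ih =>
      rw [pow_succ, ih, mul_def]
      refine Aff.ext (mul_one _) ?_
      show k • (1 : MonoidAlgebra ℤ G) + MonoidAlgebra.single 1 1 * 1 = (k+1) • 1
      rw [single_one_eq, one_mul, succ_nsmul]

/-- projection homomorphism -/
noncomputable def p : Aff G →* G where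
  toFun := Aff.g
  map_one' := rfl
  map_mul' _ _ := rfl

/-- inclusion homomorphism -/
noncomputable def j : G →* Aff G where
  toFun g := ⟨g, 0⟩
  map_one' := rfl
  map_mul' a b := by
    rw [mul_def]
    refine Aff.ext rfl ?_
    show (0 : MonoidAlgebra ℤ G) = 0 + MonoidAlgebra.single a 1 * 0
    rw [mul_zero, add_zero]

end Aff
end AffPart

section Main

variable {A : Type} [DecidableEq A] (R : Set (FreeGroup A)) (B : Set A)

/-- marking of the subgroup -/
noncomputable def piB : FreeGroup B →* PresentedGroup R :=
  (PresentedGroup.mk R).comp (FreeGroup.map (Subtype.val : B → A))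

theorem subDist_eq (g : PresentedGroup R) :
    (sInf {n : ℕ | ∃ w : FreeGroup B, piB R B w = g ∧ w.norm = n} : ℕ) =
      sInf {n : ℕ | ∃ w : FreeGroup B,
        ((PresentedGroup.mk R).comp (FreeGroup.map (Subtype.val : B → A))) w = g ∧
          w.norm = n} := rfl

theorem subDist_mul_le (g : PresentedGroup R) (w₀ : FreeGroup B) (h₀ : w₀.norm ≤ 1) :
    sInf {n : ℕ | ∃ w : FreeGroup B, piB R B w = g * piB R B w₀ ∧ w.norm = n} ≤
      sInf {n : ℕ | ∃ w : FreeGroup B, piB R B w = g ∧ w.norm = n} + 1 := by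
  by_cases hS : ∃ w : FreeGroup B, piB R B w = g
  · obtain ⟨w1, hw1⟩ := hS
    have hne : {n : ℕ | ∃ w : FreeGroup B, piB R B w = g ∧ w.norm = n}.Nonempty :=
      ⟨w1.norm, w1, hw1, rfl⟩
    obtain ⟨w, hw, hn⟩ := Nat.sInf_mem hne
    have hmem : (w * w₀).norm ∈
        {n : ℕ | ∃ w' : FreeGroup B, piB R B w' = g * piB R B w₀ ∧ w'.norm = n} :=
      ⟨w * w₀, by rw [map_mul, hw], rfl⟩
    have h2 := FreeGroup.norm_mul_le w w₀
    have h3 := Nat.sInf_le hmem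
    omega
  · have hempty : {n : ℕ | ∃ w : FreeGroup B, piB R B w = g * piB R B w₀ ∧ w.norm = n} = ∅ := by
      ext n
      simp only [Set.mem_setOf_eq, Set.mem_empty_iff_false, iff_false, not_exists]
      rintro w' ⟨hw', -⟩
      exact hS ⟨w' * w₀⁻¹, by rw [map_mul, map_inv, hw', mul_inv_cancel_right]⟩
    rw [hempty, Nat.sInf_empty]
    exact Nat.zero_le _

/-- The Lipschitz function used as weight. -/
noncomputable def sdist (g : PresentedGroup R) : ℤ :=
  ↑(sInf {n : ℕ | ∃ w : FreeGroup B, piB R B w = g ∧ w.norm = n})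

theorem sdist_def (g : PresentedGroup R) :
    sdist R B g = ↑(sInf {n : ℕ | ∃ w : FreeGroup B, piB R B w = g ∧ w.norm = n}) := rfl

theorem sdist_one : sdist R B (1 : PresentedGroup R) = 0 := by
  rw [sdist_def]
  norm_cast
  exact Nat.sInf_eq_zero.2 (Or.inl ⟨1, map_one _, FreeGroup.norm_one⟩)

theorem sdist_lip (g : PresentedGroup R) {b : A} (hb : b ∈ B) :
    |sdist R B g - sdist R B (g * PresentedGroup.of (rels := R) b)| ≤ 1 := by
  have h1 : piB R B (FreeGroup.of (⟨b, hb⟩ : B)) = PresentedGroup.of (rels := R) b := by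
    rw [piB, MonoidHom.comp_apply, FreeGroup.map.of]
    rfl
  have e1 := subDist_mul_le R B g (FreeGroup.of (⟨b, hb⟩ : B)) (le_of_eq (FreeGroup.norm_of _))
  rw [h1] at e1
  have e2 := subDist_mul_le R B (g * PresentedGroup.of (rels := R) b)
    ((FreeGroup.of (⟨b, hb⟩ : B))⁻¹)
    (le_of_eq (by rw [FreeGroup.norm_inv_eq, FreeGroup.norm_of]))
  rw [map_inv, h1, mul_inv_cancel_right] at e2
  rw [sdist_def, sdist_def, abs_le]
  omega

/-- The weighted-mass functional. -/
noncomputable def fff : MonoidAlgebra ℤ (PresentedGroup R) →+ ℤ :=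
  (Finsupp.liftAddHom fun g => AddMonoidHom.mulRight (sdist R B g)).comp
    MonoidAlgebra.coeffAddEquiv.toAddMonoidHom

@[simp] theorem fff_single (g : PresentedGroup R) (n : ℤ) :
    fff R B (MonoidAlgebra.single g n) = n * sdist R B g :=
  Finsupp.liftAddHom_apply_single _ _ _

/-- The Fox-derivative homomorphism. -/
noncomputable def Phi : FreeGroup (Option A) →* Aff (PresentedGroup R) :=
  FreeGroup.lift fun o =>
    Option.elim o (⟨1, 1⟩ : Aff (PresentedGroup R))
      (fun a => Aff.j (PresentedGroup.of (rels := R) a))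

@[simp] theorem Phi_none : Phi R (FreeGroup.of (none : Option A)) = ⟨1, 1⟩ :=
  FreeGroup.lift_apply_of

@[simp] theorem Phi_some (a : A) :
    Phi R (FreeGroup.of (some a)) = Aff.j (PresentedGroup.of (rels := R) a) :=
  FreeGroup.lift_apply_of

theorem Phi_map_some (x : FreeGroup A) :
    Phi R (FreeGroup.map some x) = Aff.j (PresentedGroup.mk R x) := by
  have h : (Phi R).comp (FreeGroup.map some) =
      (Aff.j).comp (PresentedGroup.mk R) := by
    apply FreeGroup.ext_hom
    intro a
    simp only [MonoidHom.comp_apply, FreeGroup.map.of, Phi_some]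
    rfl
  exact DFunLike.congr_fun h x

theorem Aff.comm_calc {G : Type} [Group G] (g : G) :
    (⟨1, 1⟩ : Aff G) * ⟨g, 0⟩ * (⟨1, 1⟩ : Aff G)⁻¹ * (⟨g, 0⟩ : Aff G)⁻¹ =
      ⟨1, 1 - MonoidAlgebra.single g 1⟩ := by
  rw [Aff.inv_def, Aff.inv_def, Aff.mul_def, Aff.mul_def, Aff.mul_def]
  refine Aff.ext ?_ ?_
  · show 1 * g * (1 : G)⁻¹ * g⁻¹ = 1
    group
  · show ((1 + MonoidAlgebra.single (1 : G) 1 * 0) +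
        MonoidAlgebra.single (1 * g) 1 * (-(MonoidAlgebra.single ((1:G))⁻¹ 1 * 1))) +
        MonoidAlgebra.single (1 * g * (1:G)⁻¹) 1 * (-(MonoidAlgebra.single g⁻¹ 1 * 0)) =
        1 - MonoidAlgebra.single g 1
    simp [Aff.single_one_eq, sub_eq_add_neg]

theorem relator_val₁ {r : FreeGroup (Option A)} (hr : r ∈ HNNRels R B) :
    (Phi R r).g = 1 ∧
      ∀ γ : PresentedGroup R,
        |fff R B (MonoidAlgebra.single γ 1 * (Phi R r).a)| ≤ 1 := by
  rcases hr with ⟨r₀, hr₀, rfl⟩ | ⟨b, hb, rfl⟩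
  · have h1 : PresentedGroup.mk R r₀ = 1 :=
      (QuotientGroup.eq_one_iff r₀).2 (Subgroup.subset_normalClosure hr₀)
    rw [Phi_map_some, h1, map_one]
    refine ⟨rfl, fun γ => ?_⟩
    show |fff R B (MonoidAlgebra.single γ 1 * (0 : MonoidAlgebra ℤ (PresentedGroup R)))| ≤ 1
    rw [mul_zero, map_zero]
    norm_num
  · have hc : Phi R ⁅FreeGroup.of (none : Option A), FreeGroup.of (some b)⁆ =
        ⟨1, 1 - MonoidAlgebra.single (PresentedGroup.of (rels := R) b) 1⟩ := by
      rw [commutatorElement_def]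
      simp only [map_mul, map_inv, Phi_none, Phi_some]
      have hj : Aff.j (PresentedGroup.of (rels := R) b) =
          (⟨PresentedGroup.of (rels := R) b, 0⟩ : Aff (PresentedGroup R)) := rfl
      rw [hj]
      exact Aff.comm_calc (G := PresentedGroup R) (PresentedGroup.of (rels := R) b)
    rw [hc]
    refine ⟨rfl, fun γ => ?_⟩
    show |fff R B (MonoidAlgebra.single γ 1 *
      (1 - MonoidAlgebra.single (PresentedGroup.of (rels := R) b) 1))| ≤ 1
    rw [mul_sub, mul_one, MonoidAlgebra.single_mul_single, one_mul, map_sub,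
      fff_single, fff_single, one_mul, one_mul]
    exact sdist_lip R B γ hb

theorem relator_val {r : FreeGroup (Option A)}
    (hr : r ∈ HNNRels R B ∨ r⁻¹ ∈ HNNRels R B) :
    (Phi R r).g = 1 ∧
      ∀ γ : PresentedGroup R,
        |fff R B (MonoidAlgebra.single γ 1 * (Phi R r).a)| ≤ 1 := by
  rcases hr with hr | hr
  · exact relator_val₁ R B hr
  · obtain ⟨hg, hb⟩ := relator_val₁ R B hr
    have h1 : Phi R r = (Phi R r⁻¹)⁻¹ := by rw [map_inv, inv_inv]
    rw [h1, Aff.inv_of_g_one _ hg]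
    refine ⟨rfl, fun γ => ?_⟩
    show |fff R B (MonoidAlgebra.single γ 1 * -(Phi R r⁻¹).a)| ≤ 1
    rw [mul_neg, map_neg, abs_neg]
    exact hb γ

theorem prod_est (L : List (Aff (PresentedGroup R)))
    (h : ∀ x ∈ L, x.g = 1 ∧ |fff R B x.a| ≤ 1) :
    (L.prod).g = 1 ∧ |fff R B (L.prod).a| ≤ (L.length : ℤ) := by
  induction L with
  | nil =>
      constructor
      · rfl
      · show |fff R B (0 : MonoidAlgebra ℤ (PresentedGroup R))| ≤ _
        rw [map_zero]
        norm_num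
  | cons x L ih =>
      have hx := h x (by simp)
      have hL := ih fun y hy => h y (by simp [hy])
      rw [List.prod_cons, Aff.mul_def]
      constructor
      · show x.g * L.prod.g = 1
        rw [hx.1, hL.1, one_mul]
      · show |fff R B (x.a + MonoidAlgebra.single x.g 1 * L.prod.a)| ≤ _
        rw [hx.1, Aff.single_one_eq, one_mul, map_add]
        calc |fff R B x.a + fff R B L.prod.a|
            ≤ |fff R B x.a| + |fff R B L.prod.a| := abs_add_le _ _
          _ ≤ 1 + L.length := add_le_add hx.2 hL.2
          _ = ((x :: L).length : ℤ) := by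
              rw [List.length_cons]
              push_cast
              ring

theorem Aff.conj_pow_calc {G : Type} [Group G] (h : G) (m : ℕ) :
    (⟨h, 0⟩ : Aff G) * ⟨1, m • 1⟩ * (⟨h, 0⟩ : Aff G)⁻¹ *
        (⟨1, m • (1 : MonoidAlgebra ℤ G)⟩ : Aff G)⁻¹ =
      ⟨1, m • MonoidAlgebra.single h 1 - m • (1 : MonoidAlgebra ℤ G)⟩ := by
  rw [Aff.inv_def, Aff.inv_def, Aff.mul_def, Aff.mul_def, Aff.mul_def]
  refine Aff.ext ?_ ?_
  · show h * 1 * h⁻¹ * (1 : G)⁻¹ = 1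
    group
  · show ((0 + MonoidAlgebra.single h 1 * (m • 1)) +
        MonoidAlgebra.single (h * 1) 1 * (-(MonoidAlgebra.single h⁻¹ 1 * 0))) +
        MonoidAlgebra.single (h * 1 * h⁻¹) 1 *
          (-(MonoidAlgebra.single ((1 : G))⁻¹ 1 * (m • 1))) =
        m • MonoidAlgebra.single h 1 - m • 1
    simp only [mul_zero, neg_zero, add_zero, zero_add, mul_one, inv_one,
      mul_inv_cancel, Aff.single_one_eq, one_mul, mul_smul_comm, sub_eq_add_neg]

theorem Phi_W (v : FreeGroup A) (m : ℕ) :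
    Phi R (FreeGroup.map some v * FreeGroup.of (none : Option A) ^ m *
        (FreeGroup.map some v)⁻¹ * (FreeGroup.of (none : Option A) ^ m)⁻¹) =
      ⟨1, m • MonoidAlgebra.single (PresentedGroup.mk R v) 1 -
        m • (1 : MonoidAlgebra ℤ (PresentedGroup R))⟩ := by
  simp only [map_mul, map_inv, map_pow, Phi_none, Phi_map_some, Aff.pow_one_one]
  have hj : Aff.j (PresentedGroup.mk R v) =
      (⟨PresentedGroup.mk R v, 0⟩ : Aff (PresentedGroup R)) := rfl
  rw [hj]
  exact Aff.conj_pow_calc _ _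


theorem W_mem (v : FreeGroup A) (hvH : PresentedGroup.mk R v ∈ Hsub R B) (m : ℕ) :
    (FreeGroup.map some v * FreeGroup.of (none : Option A) ^ m *
      (FreeGroup.map some v)⁻¹ * (FreeGroup.of (none : Option A) ^ m)⁻¹) ∈
      Subgroup.normalClosure (HNNRels R B) := by
  obtain ⟨u, hu⟩ : ∃ u : FreeGroup B, piB R B u = PresentedGroup.mk R v := by
    have hle : Hsub R B ≤ (piB R B).range := by
      rw [Hsub]
      refine (Subgroup.closure_le _).2 ?_
      rintro x ⟨y, ⟨b, hb, rfl⟩, rfl⟩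
      exact ⟨FreeGroup.of (⟨b, hb⟩ : B),
        by rw [piB, MonoidHom.comp_apply, FreeGroup.map.of]⟩
    exact hle hvH
  have hmkU : PresentedGroup.mk R (FreeGroup.map (Subtype.val : B → A) u) =
      PresentedGroup.mk R v := hu
  have hn : v * (FreeGroup.map (Subtype.val : B → A) u)⁻¹ ∈ Subgroup.normalClosure R := by
    refine (QuotientGroup.eq_one_iff _).1 ?_
    show PresentedGroup.mk R (v * (FreeGroup.map (Subtype.val : B → A) u)⁻¹) = 1
    rw [map_mul, map_inv, hmkU, mul_inv_cancel]
  have hn' : FreeGroup.map some (v * (FreeGroup.map (Subtype.val : B → A) u)⁻¹) ∈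
      Subgroup.normalClosure (HNNRels R B) := by
    haveI : (Subgroup.comap (FreeGroup.map some : FreeGroup A →* FreeGroup (Option A))
        (Subgroup.normalClosure (HNNRels R B))).Normal :=
      Subgroup.Normal.comap Subgroup.normalClosure_normal _
    have hle : Subgroup.normalClosure R ≤
        Subgroup.comap (FreeGroup.map some : FreeGroup A →* FreeGroup (Option A))
          (Subgroup.normalClosure (HNNRels R B)) := by
      refine Subgroup.normalClosure_le_normal ?_
      intro r₀ hr₀
      show FreeGroup.map some r₀ ∈ Subgroup.normalClosure (HNNRels R B)
      exact Subgroup.subset_normalClosure (Or.inl ⟨r₀, hr₀, rfl⟩)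
    exact Subgroup.mem_comap.1 (hle hn)
  have hcomm : ∀ w : FreeGroup B,
      Commute (PresentedGroup.mk (HNNRels R B)
          (FreeGroup.map some (FreeGroup.map (Subtype.val : B → A) w)))
        (PresentedGroup.mk (HNNRels R B) (FreeGroup.of (none : Option A))) := by
    intro w
    induction w using FreeGroup.induction_on with
    | C1 => rw [map_one, map_one, map_one]; exact Commute.one_left _
    | of x =>
        have h1 : PresentedGroup.mk (HNNRels R B)
            ⁅FreeGroup.of (none : Option A), FreeGroup.of (some (x : A))⁆ = 1 :=
          (QuotientGroup.eq_one_iff _).2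
            (Subgroup.subset_normalClosure (Or.inr ⟨(x : A), x.2, rfl⟩))
        rw [map_commutatorElement] at h1
        have h2 := commutatorElement_eq_one_iff_commute.1 h1
        show Commute (PresentedGroup.mk (HNNRels R B)
            (FreeGroup.map some (FreeGroup.map (Subtype.val : B → A) (FreeGroup.of x)))) _
        rw [FreeGroup.map.of, FreeGroup.map.of]
        exact h2.symm
    | inv_of x ih =>
        show Commute (PresentedGroup.mk (HNNRels R B)
            (FreeGroup.map some (FreeGroup.map (Subtype.val : B → A) (FreeGroup.of x)⁻¹))) _
        rw [map_inv, map_inv, map_inv]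
        exact (show Commute _ _ from ih).inv_left
    | mul x y hx hy =>
        rw [map_mul, map_mul, map_mul]
        exact hx.mul_left hy
  have hc2 : ⁅FreeGroup.map some (FreeGroup.map (Subtype.val : B → A) u),
      FreeGroup.of (none : Option A) ^ m⁆ ∈ Subgroup.normalClosure (HNNRels R B) := by
    refine (QuotientGroup.eq_one_iff _).1 ?_
    show PresentedGroup.mk (HNNRels R B) _ = 1
    rw [map_commutatorElement, map_pow]
    exact commutatorElement_eq_one_iff_commute.2 ((hcomm u).pow_right m)
  have key : FreeGroup.map some v * FreeGroup.of (none : Option A) ^ m *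
      (FreeGroup.map some v)⁻¹ * (FreeGroup.of (none : Option A) ^ m)⁻¹ =
      (FreeGroup.map some (v * (FreeGroup.map (Subtype.val : B → A) u)⁻¹)) *
        ⁅FreeGroup.map some (FreeGroup.map (Subtype.val : B → A) u),
          FreeGroup.of (none : Option A) ^ m⁆ *
        ((FreeGroup.of (none : Option A) ^ m) *
          (FreeGroup.map some (v * (FreeGroup.map (Subtype.val : B → A) u)⁻¹))⁻¹ *
          (FreeGroup.of (none : Option A) ^ m)⁻¹) := by
    simp only [map_mul, map_inv, commutatorElement_def]
    group
  rw [key]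
  have hN : (Subgroup.normalClosure (HNNRels R B)).Normal := Subgroup.normalClosure_normal
  exact Subgroup.mul_mem _ (Subgroup.mul_mem _ hn' hc2)
    (hN.conj_mem _ (Subgroup.inv_mem _ hn') _)

end Main
end Stmt4A

theorem stmt4 {A : Type} [DecidableEq A] [Finite A]
    (R : Set (FreeGroup A)) (hR : R.Finite) (B : Set A)
    (v : FreeGroup A) (hv : InjectiveWord R v)
    (hvH : PresentedGroup.mk R v ∈ Hsub R B) (m : ℕ) :
    m * subDist R B (PresentedGroup.mk R v) ≤
      areaOf (HNNRels R B)
        (FreeGroup.map some v * FreeGroup.of (none : Option A) ^ m *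
          (FreeGroup.map some v)⁻¹ * (FreeGroup.of (none : Option A) ^ m)⁻¹) := by
  classical
  unfold areaOf
  refine le_csInf ?_ ?_
  · obtain ⟨L, hL, hprod⟩ := Stmt4A.ncl_decomp (Stmt4A.W_mem R B v hvH m)
    refine ⟨L.length, fun i => (L.get i).1, fun i => (L.get i).2,
      fun i => hL _ (List.get_mem L i), ?_⟩
    rw [hprod]
    congr 1
    conv_lhs => rw [← List.ofFn_get L]
    rw [List.map_ofFn]
    rfl
  · rintro n ⟨c, r, hr, hw⟩
    have hΦ := congrArg (Stmt4A.Phi R) hw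
    rw [Stmt4A.Phi_W R v m, map_list_prod, List.map_ofFn] at hΦ
    set L : List (Stmt4A.Aff (PresentedGroup R)) :=
      List.ofFn ((Stmt4A.Phi R) ∘ fun i => (c i)⁻¹ * r i * c i) with hLdef
    have hmem : ∀ x ∈ L, x.g = 1 ∧ |Stmt4A.fff R B x.a| ≤ 1 := by
      intro x hx
      rw [hLdef, List.mem_ofFn] at hx
      obtain ⟨i, rfl⟩ := hx
      have hrel := Stmt4A.relator_val R B (hr i)
      simp only [Function.comp_apply, map_mul, map_inv]
      rw [Stmt4A.Aff.conj_calc _ _ hrel.1]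
      exact ⟨rfl, hrel.2 _⟩
    obtain ⟨-, hbound⟩ := Stmt4A.prod_est R B L hmem
    rw [← hΦ] at hbound
    have hbound2 : |Stmt4A.fff R B
        (m • MonoidAlgebra.single (PresentedGroup.mk R v) 1 -
          m • (1 : MonoidAlgebra ℤ (PresentedGroup R)))| ≤ (L.length : ℤ) := hbound
    have hval : Stmt4A.fff R B
        (m • MonoidAlgebra.single (PresentedGroup.mk R v) 1 -
          m • (1 : MonoidAlgebra ℤ (PresentedGroup R))) =
        (m : ℤ) * Stmt4A.sdist R B (PresentedGroup.mk R v) := by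
      rw [map_sub, map_nsmul, map_nsmul, Stmt4A.fff_single]
      have h1 : (1 : MonoidAlgebra ℤ (PresentedGroup R)) =
          MonoidAlgebra.single 1 1 := MonoidAlgebra.one_def
      rw [h1, Stmt4A.fff_single, Stmt4A.sdist_one, one_mul, mul_zero, smul_zero,
        sub_zero, nsmul_eq_mul]
    have hsd : Stmt4A.sdist R B (PresentedGroup.mk R v) =
        (subDist R B (PresentedGroup.mk R v) : ℤ) := rfl
    have hlen : L.length = n := by rw [hLdef, List.length_ofFn]
    rw [hval, hsd, hlen] at hbound2
    have habs : ((m : ℤ) * (subDist R B (PresentedGroup.mk R v) : ℤ)) ≤ (n : ℤ) := by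
      calc (m : ℤ) * (subDist R B (PresentedGroup.mk R v) : ℤ)
          = |(m : ℤ) * (subDist R B (PresentedGroup.mk R v) : ℤ)| :=
            (abs_of_nonneg (by positivity)).symm
        _ ≤ (n : ℤ) := hbound2
    exact_mod_cast habs
end

section
/- For every integer c ≥ 1, the distortion of the centre ⟨z_c⟩ of G_c in G_c is ≃ n^{c−1}; equivalently, the function n ↦ max{|m| : d(1, z_c^m) ≤ n} is ≃ n^c, where d is the word metric on G_c with respect to its standard generators. -/
open scoped commutatorElement

namespace Stmt13Aux

/-- extend a `Fin c`-vector by zero -/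
def vext {c : ℕ} (v : Fin c → ℤ) (l : ℕ) : ℤ :=
  if h : l < c then v ⟨l, h⟩ else 0

def sigFun (c : ℕ) (v : Fin c → ℤ) : Fin c → ℤ :=
  fun j => v j - (if 0 < (j : ℕ) then vext v ((j : ℕ) - 1) else 0)

def tauFun (c : ℕ) (v : Fin c → ℤ) : Fin c → ℤ :=
  fun j => ∑ l ∈ Finset.range ((j : ℕ) + 1), vext v l

lemma vext_lt {c : ℕ} (v : Fin c → ℤ) {l : ℕ} (h : l < c) : vext v l = v ⟨l, h⟩ :=
  dif_pos h

lemma vext_sigFun {c : ℕ} (v : Fin c → ℤ) (l : ℕ) (hl : l < c) :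
    vext (sigFun c v) l = vext v l - (if 0 < l then vext v (l - 1) else 0) := by
  rw [vext_lt _ hl, vext_lt v hl]; rfl

instance addAutGroup (M : Type*) [Add M] : Group (AddAut M) :=
  inferInstanceAs (Group (Multiplicative (AddAut M)))

def sigAut (c : ℕ) : AddAut (Fin c → ℤ) where
  toFun := sigFun c
  invFun := tauFun c
  left_inv := by
    intro v
    funext j
    have hj : (j : ℕ) < c := j.2
    show ∑ l ∈ Finset.range ((j : ℕ) + 1), vext (sigFun c v) l = v j
    have key : ∀ l ∈ Finset.range ((j : ℕ) + 1),
        vext (sigFun c v) l = vext v l - (if 0 < l then vext v (l - 1) else 0) := by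
      intro l hl
      exact vext_sigFun v l (lt_of_lt_of_le (Finset.mem_range.1 hl) hj)
    rw [Finset.sum_congr rfl key, Finset.sum_sub_distrib]
    have h2 : ∑ l ∈ Finset.range ((j : ℕ) + 1), (if 0 < l then vext v (l - 1) else 0)
        = ∑ l ∈ Finset.range (j : ℕ), vext v l := by
      rw [Finset.sum_range_succ']
      simp
    rw [h2, Finset.sum_range_succ]
    simp only [add_sub_cancel_left]
    rw [vext_lt v hj, Fin.eta]
  right_inv := by
    intro v
    funext j
    have hj : (j : ℕ) < c := j.2
    show tauFun c v j - _ = v j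
    rcases Nat.eq_zero_or_pos (j : ℕ) with h0 | h0
    · simp only [sigFun, h0, if_neg (lt_irrefl 0)]
      show tauFun c v j - 0 = v j
      have ht : tauFun c v j = vext v (j : ℕ) := by
        simp only [tauFun, h0, zero_add, Finset.sum_range_one]
      rw [ht, vext_lt v hj, Fin.eta, sub_zero]
    · have hj1 : (j : ℕ) - 1 < c := lt_of_le_of_lt (Nat.sub_le _ _) hj
      simp only [sigFun, if_pos h0]
      show tauFun c v j - vext (tauFun c v) ((j:ℕ)-1) = v j
      rw [vext_lt (tauFun c v) hj1]
      show (∑ l ∈ Finset.range ((j : ℕ) + 1), vext v l)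
          - (∑ l ∈ Finset.range (((j:ℕ) - 1) + 1), vext v l) = v j
      rw [Nat.sub_add_cancel h0, Finset.sum_range_succ]
      simp [vext_lt v hj]
  map_add' := by
    intro v w
    funext j
    simp only [sigFun, vext, Pi.add_apply]
    split_ifs <;> ring

lemma sigAut_apply (c : ℕ) (v : Fin c → ℤ) : sigAut c v = sigFun c v := rfl
lemma sigAut_symm_apply (c : ℕ) (v : Fin c → ℤ) : (sigAut c)⁻¹ v = tauFun c v := rfl

/-- The model group `ℤ^c ⋊ ℤ`. -/
structure MG (c : ℕ) where
  v : Fin c → ℤ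
  k : ℤ

def act (c : ℕ) (k : ℤ) (v : Fin c → ℤ) : Fin c → ℤ := (sigAut c ^ k) v

lemma act_add (c : ℕ) (k l : ℤ) (v : Fin c → ℤ) :
    act c (k + l) v = act c k (act c l v) := by
  simp only [act, zpow_add]; rfl

lemma act_zero (c : ℕ) (v : Fin c → ℤ) : act c 0 v = v := by simp [act]; rfl

lemma act_addv (c : ℕ) (k : ℤ) (v w : Fin c → ℤ) :
    act c k (v + w) = act c k v + act c k w := map_add _ _ _

lemma act_zerov (c : ℕ) (k : ℤ) : act c k 0 = 0 :=
  map_zero ((sigAut c ^ k) : (Fin c → ℤ) ≃+ _)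

lemma act_negv (c : ℕ) (k : ℤ) (v : Fin c → ℤ) : act c k (-v) = -(act c k v) := map_neg _ _

lemma act_one (c : ℕ) (v : Fin c → ℤ) : act c 1 v = sigFun c v := by
  simp only [act, zpow_one]; rfl

lemma act_negone (c : ℕ) (v : Fin c → ℤ) : act c (-1) v = tauFun c v := by
  simp only [act, zpow_neg, zpow_one]; rfl

instance (c : ℕ) : Group (MG c) where
  mul a b := ⟨a.v + act c a.k b.v, a.k + b.k⟩
  one := ⟨0, 0⟩
  inv a := ⟨-(act c (-a.k) a.v), -a.k⟩
  mul_assoc a b d := by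
    show MG.mk ((a.v + act c a.k b.v) + act c (a.k + b.k) d.v) ((a.k + b.k) + d.k)
      = MG.mk (a.v + act c a.k (b.v + act c b.k d.v)) (a.k + (b.k + d.k))
    rw [act_add, act_addv]
    congr 1 <;> [skip; ring]
    abel
  one_mul a := by
    show MG.mk (0 + act c 0 a.v) (0 + a.k) = a
    rw [act_zero]; simp
  mul_one a := by
    show MG.mk (a.v + act c a.k 0) (a.k + 0) = a
    rw [act_zerov]; simp
  inv_mul_cancel a := by
    show MG.mk (-(act c (-a.k) a.v) + act c (-a.k) a.v) (-a.k + a.k) = MG.mk 0 0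
    simp

lemma MG_mul {c : ℕ} (v w : Fin c → ℤ) (k l : ℤ) :
    (MG.mk v k * MG.mk w l : MG c) = MG.mk (v + act c k w) (k + l) := rfl
lemma MG_inv {c : ℕ} (v : Fin c → ℤ) (k : ℤ) :
    (MG.mk v k)⁻¹ = MG.mk (-(act c (-k) v)) (-k) := rfl
lemma MG_one {c : ℕ} : (1 : MG c) = MG.mk 0 0 := rfl

lemma MG_abelian_mul {c : ℕ} (v w : Fin c → ℤ) :
    (MG.mk v 0 * MG.mk w 0 : MG c) = MG.mk (v + w) 0 := by rw [MG_mul, act_zero, add_zero]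

lemma MG_pow {c : ℕ} (v : Fin c → ℤ) (n : ℕ) :
    (MG.mk v 0 : MG c) ^ n = MG.mk ((n : ℤ) • v) 0 := by
  induction n with
  | zero =>
    show (1 : MG c) = _
    rw [MG_one]; simp
  | succ n ih =>
    rw [pow_succ, ih, MG_abelian_mul]
    congr 1
    push_cast
    rw [add_smul, one_smul]

lemma MG_zpow {c : ℕ} (v : Fin c → ℤ) (m : ℤ) :
    (MG.mk v 0 : MG c) ^ m = MG.mk (m • v) 0 := by
  rcases m with n | n
  · rw [Int.ofNat_eq_coe, zpow_natCast, MG_pow]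
  · rw [zpow_negSucc, MG_pow, MG_inv, neg_zero, act_zero]
    congr 1
    rw [← neg_smul]
    have h : -((n + 1 : ℕ) : ℤ) = Int.negSucc n := by
      rw [Int.negSucc_eq]; push_cast; ring
    rw [h]

lemma sigFun_single_apply (c : ℕ) (i j : Fin c) (m : ℤ) :
    sigFun c (Pi.single i m) j
      = (if j = i then m else 0) - (if (j : ℕ) = (i : ℕ) + 1 then m else 0) := by
  simp only [sigFun]
  rw [Pi.single_apply]
  congr 1
  rcases Nat.eq_zero_or_pos (j : ℕ) with h0 | h0
  · rw [if_neg (by omega), if_neg (by omega)]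
  · rw [if_pos h0]
    have hj1 : (j : ℕ) - 1 < c := lt_of_le_of_lt (Nat.sub_le _ _) j.2
    rw [vext_lt _ hj1, Pi.single_apply]
    by_cases h : (j : ℕ) = (i : ℕ) + 1
    · rw [if_pos (by rw [Fin.ext_iff]; simp; omega), if_pos h]
    · rw [if_neg (by rw [Fin.ext_iff]; simp; omega), if_neg h]

lemma MG_comm_ab {c : ℕ} (v w : Fin c → ℤ) :
    ⁅(MG.mk v 0 : MG c), MG.mk w 0⁆ = 1 := by
  rw [commutatorElement_eq_one_iff_commute]
  show _ * _ = _ * _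
  rw [MG_abelian_mul, MG_abelian_mul, add_comm]

lemma MG_comm_vT {c : ℕ} (v : Fin c → ℤ) :
    ⁅(MG.mk v 0 : MG c), MG.mk 0 1⁆ = MG.mk (v - sigFun c v) 0 := by
  simp only [commutatorElement_def, MG_inv, MG_mul, act_zerov, act_zero, neg_zero,
    act_negv, act_one, add_zero, zero_add]
  congr 1

def gens (c : ℕ) : GcGen c → MG c
  | some i => MG.mk (Pi.single i 1) 0
  | none => MG.mk 0 1

lemma hrels (c : ℕ) : ∀ r ∈ GcRels c, FreeGroup.lift (gens c) r = 1 := by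
  rintro r hr
  rcases hr with ⟨i, j, rfl⟩ | ⟨i, hi, rfl⟩ | ⟨i, j, hj, rfl⟩
  · rw [map_commutatorElement, FreeGroup.lift_apply_of, FreeGroup.lift_apply_of]
    exact MG_comm_ab _ _
  · rw [map_commutatorElement, FreeGroup.lift_apply_of, FreeGroup.lift_apply_of]
    show ⁅(MG.mk (Pi.single i 1) 0 : MG c), MG.mk 0 1⁆ = 1
    rw [MG_comm_vT, MG_one]
    congr 1
    funext l
    have : ¬ ((l : ℕ) = (i : ℕ) + 1) := by have := l.2; omega
    simp only [Pi.sub_apply, Pi.zero_apply, sigFun_single_apply, Pi.single_apply, if_neg this]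
    ring
  · rw [map_mul, map_inv, map_commutatorElement, FreeGroup.lift_apply_of, FreeGroup.lift_apply_of,
      FreeGroup.lift_apply_of]
    show ⁅(MG.mk (Pi.single i 1) 0 : MG c), MG.mk 0 1⁆ * (MG.mk (Pi.single j 1) 0)⁻¹ = 1
    rw [MG_comm_vT, MG_inv, neg_zero, act_zero, MG_mul, act_zero, MG_one]
    congr 1
    funext l
    simp only [Pi.add_apply, Pi.sub_apply, sigFun_single_apply, Pi.single_apply,
      Pi.neg_apply, Pi.zero_apply]
    have : (l = j) ↔ ((l : ℕ) = (i : ℕ) + 1) := by rw [Fin.ext_iff]; omega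
    by_cases h : l = j
    · rw [if_pos h, if_pos (this.1 h)]; ring
    · rw [if_neg h, if_neg (fun hh => h (this.2 hh))]; ring

noncomputable def piM (c : ℕ) : PresentedGroup (GcRels c) →* MG c :=
  PresentedGroup.toGroup (hrels c)

lemma piM_mk (c : ℕ) (w : FreeGroup (GcGen c)) :
    piM c (PresentedGroup.mk (GcRels c) w) = FreeGroup.lift (gens c) w := rfl

lemma hockey (j l : ℕ) :
    ∑ d ∈ Finset.range (j + 1), Nat.choose (l + d) d = Nat.choose (l + j + 1) j := by
  induction j with
  | zero => simp
  | succ j ih =>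
    rw [Finset.sum_range_succ, ih]
    exact (Nat.choose_succ_succ (l + j + 1) j).symm

def wimg (c : ℕ) (x : GcGen c × Bool) : MG c := cond x.2 (gens c x.1) (gens c x.1)⁻¹

lemma natAbs_le_iff {a : ℤ} {b : ℕ} : a.natAbs ≤ b ↔ |a| ≤ (b : ℤ) := by
  rw [Int.abs_eq_natAbs, ← Nat.cast_le (α := ℤ)]

lemma prod_bound (c : ℕ) (L : List (GcGen c × Bool)) :
    ((L.map (wimg c)).prod.k.natAbs ≤ L.length) ∧
    ∀ j : Fin c, ((L.map (wimg c)).prod.v j).natAbs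
      ≤ L.length * Nat.choose (L.length + (j : ℕ)) (j : ℕ) := by
  induction L with
  | nil =>
    constructor
    · show ((1 : MG c)).k.natAbs ≤ 0
      simp [MG_one]
    · intro j
      show (((1 : MG c)).v j).natAbs ≤ _
      simp [MG_one]
  | cons x L ih =>
    obtain ⟨hk, hv⟩ := ih
    set l := L.length with hl
    have hprod : ((x :: L).map (wimg c)).prod = wimg c x * (L.map (wimg c)).prod := by
      rw [List.map_cons, List.prod_cons]
    have hlen : (x :: L).length = l + 1 := rfl
    rw [hprod, hlen]
    have hchmono : ∀ j : ℕ, Nat.choose (l + j) j ≤ Nat.choose (l + 1 + j) j :=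
      fun j => Nat.choose_le_choose j (by omega)
    have hchpos : ∀ a b : ℕ, b ≤ a → 0 < Nat.choose a b := fun a b h => Nat.choose_pos h
    obtain ⟨a, b⟩ := x
    rcases a with _ | i
    · -- t-letter
      rcases b with _ | _
      · -- inverse of t
        have hw : wimg c (none, false) = MG.mk 0 (-1) := by
          show (MG.mk 0 1)⁻¹ = _
          rw [MG_inv, act_zerov, neg_zero]
        rw [hw]
        have hm : (MG.mk 0 (-1) : MG c) * (L.map (wimg c)).prod
            = MG.mk (act c (-1) ((L.map (wimg c)).prod.v)) (-1 + (L.map (wimg c)).prod.k) := by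
          rw [show (L.map (wimg c)).prod = MG.mk (L.map (wimg c)).prod.v (L.map (wimg c)).prod.k
            from rfl, MG_mul, zero_add]
        rw [hm]
        constructor
        · show (-1 + (L.map (wimg c)).prod.k).natAbs ≤ l + 1
          have := Int.natAbs_add_le (-1) ((L.map (wimg c)).prod.k)
          simp at this
          omega
        · intro j
          show ((act c (-1) ((L.map (wimg c)).prod.v)) j).natAbs ≤ _
          rw [act_negone]
          rw [natAbs_le_iff]
          have habs : |tauFun c ((L.map (wimg c)).prod.v) j|
              ≤ ∑ d ∈ Finset.range ((j : ℕ) + 1), |vext ((L.map (wimg c)).prod.v) d| :=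
            Finset.abs_sum_le_sum_abs _ _
          have hterm : ∀ d ∈ Finset.range ((j : ℕ) + 1),
              |vext ((L.map (wimg c)).prod.v) d| ≤ ((l * Nat.choose (l + d) d : ℕ) : ℤ) := by
            intro d hd
            have hdc : d < c := lt_of_le_of_lt (by
              have := Finset.mem_range.1 hd; omega : d ≤ (j : ℕ)) j.2
            rw [vext_lt _ hdc]
            have := hv ⟨d, hdc⟩
            rw [natAbs_le_iff] at this
            exact this
          have hsum : ∑ d ∈ Finset.range ((j : ℕ) + 1), ((l * Nat.choose (l + d) d : ℕ) : ℤ)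
              = ((l * Nat.choose (l + (j : ℕ) + 1) (j : ℕ) : ℕ) : ℤ) := by
            rw [← Nat.cast_sum]
            congr 1
            rw [← Finset.mul_sum, hockey]
          calc |tauFun c ((L.map (wimg c)).prod.v) j|
              ≤ ∑ d ∈ Finset.range ((j : ℕ) + 1), |vext ((L.map (wimg c)).prod.v) d| := habs
            _ ≤ ∑ d ∈ Finset.range ((j : ℕ) + 1), ((l * Nat.choose (l + d) d : ℕ) : ℤ) :=
                Finset.sum_le_sum hterm
            _ = ((l * Nat.choose (l + (j : ℕ) + 1) (j : ℕ) : ℕ) : ℤ) := hsum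
            _ ≤ (((l + 1) * Nat.choose (l + 1 + (j : ℕ)) (j : ℕ) : ℕ) : ℤ) := by
                rw [Nat.cast_le]
                apply Nat.mul_le_mul (by omega)
                apply Nat.choose_le_choose
                omega
      · -- t itself
        have hw : wimg c (none, true) = MG.mk 0 1 := rfl
        rw [hw]
        have hm : (MG.mk 0 1 : MG c) * (L.map (wimg c)).prod
            = MG.mk (act c 1 ((L.map (wimg c)).prod.v)) (1 + (L.map (wimg c)).prod.k) := by
          rw [show (L.map (wimg c)).prod = MG.mk (L.map (wimg c)).prod.v (L.map (wimg c)).prod.k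
            from rfl, MG_mul, zero_add]
        rw [hm]
        constructor
        · show (1 + (L.map (wimg c)).prod.k).natAbs ≤ l + 1
          have := Int.natAbs_add_le 1 ((L.map (wimg c)).prod.k)
          simp at this
          omega
        · intro j
          show ((act c 1 ((L.map (wimg c)).prod.v)) j).natAbs ≤ _
          rw [act_one]
          show ((L.map (wimg c)).prod.v j - _).natAbs ≤ _
          rcases Nat.eq_zero_or_pos (j : ℕ) with h0 | h0
          · rw [if_neg (by omega)]
            rw [sub_zero, h0]
            have := hv j
            rw [h0] at this
            simp only [Nat.add_zero, Nat.choose_zero_right, Nat.mul_one] at this ⊢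
            omega
          · rw [if_pos h0]
            have hj1 : (j : ℕ) - 1 < c := lt_of_le_of_lt (Nat.sub_le _ _) j.2
            rw [vext_lt _ hj1]
            obtain ⟨e, he⟩ : ∃ e, (j : ℕ) = e + 1 := ⟨(j : ℕ) - 1, by omega⟩
            have h1 := hv j
            have h2 : ((L.map (wimg c)).prod.v ⟨(j : ℕ) - 1, hj1⟩).natAbs
                ≤ l * Nat.choose (l + ((j:ℕ) - 1)) ((j:ℕ) - 1) := hv ⟨(j : ℕ) - 1, hj1⟩
            have hstep := Int.natAbs_sub_le ((L.map (wimg c)).prod.v j)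
              ((L.map (wimg c)).prod.v ⟨(j : ℕ) - 1, hj1⟩)
            -- arithmetic
            have harith : l * Nat.choose (l + (j:ℕ)) (j:ℕ)
                + l * Nat.choose (l + ((j:ℕ) - 1)) ((j:ℕ) - 1)
                ≤ (l + 1) * Nat.choose (l + 1 + (j:ℕ)) (j:ℕ) := by
              rw [he]
              have hd1 : (e + 1 : ℕ) - 1 = e := by omega
              rw [hd1]
              have hp : Nat.choose (l + 1 + (e + 1)) (e + 1)
                  = Nat.choose (l + e + 1) e + Nat.choose (l + e + 1) (e + 1) := by
                have h3 : l + 1 + (e + 1) = (l + e + 1) + 1 := by omega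
                rw [h3, Nat.choose_succ_succ (l + e + 1) e]
              rw [hp]
              have q1 : Nat.choose (l + (e + 1)) (e + 1) ≤ Nat.choose (l + e + 1) (e + 1) := by
                apply Nat.choose_le_choose; omega
              have q2 : Nat.choose (l + e) e ≤ Nat.choose (l + e + 1) e := by
                apply Nat.choose_le_choose; omega
              calc l * Nat.choose (l + (e+1)) (e+1) + l * Nat.choose (l + e) e
                  ≤ (l+1) * Nat.choose (l + e + 1) (e+1) + (l+1) * Nat.choose (l + e + 1) e := by
                    apply Nat.add_le_add
                    · exact Nat.mul_le_mul (by omega) q1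
                    · exact Nat.mul_le_mul (by omega) q2
                _ = (l+1) * (Nat.choose (l + e + 1) e + Nat.choose (l + e + 1) (e+1)) := by ring
            omega
    · -- x-letter
      have hw : wimg c (some i, b)
          = MG.mk (if b then Pi.single i 1 else -Pi.single i (1:ℤ)) 0 := by
        rcases b with _ | _
        · show (MG.mk (Pi.single i 1) 0)⁻¹ = _
          rw [MG_inv, neg_zero, act_zero]
          rfl
        · rfl
      rw [hw]
      have hm : (MG.mk (if b then Pi.single i 1 else -Pi.single i (1:ℤ)) 0 : MG c)
            * (L.map (wimg c)).prod
          = MG.mk ((if b then Pi.single i 1 else -Pi.single i (1:ℤ))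
              + (L.map (wimg c)).prod.v) (0 + (L.map (wimg c)).prod.k) := by
        rw [show (L.map (wimg c)).prod = MG.mk (L.map (wimg c)).prod.v (L.map (wimg c)).prod.k
          from rfl, MG_mul, act_zero]
      rw [hm]
      constructor
      · show ((0 : ℤ) + (L.map (wimg c)).prod.k).natAbs ≤ l + 1
        rw [zero_add]
        omega
      · intro j
        have hgoal : (MG.mk ((if b then Pi.single i 1 else -Pi.single i (1:ℤ))
              + (L.map (wimg c)).prod.v) (0 + (L.map (wimg c)).prod.k)).v j
            = ((if b then Pi.single i 1 else -Pi.single i (1:ℤ) : Fin c → ℤ) j)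
              + (L.map (wimg c)).prod.v j := rfl
        rw [hgoal]
        have h1 : ((if b then Pi.single i 1 else -Pi.single i (1:ℤ) : Fin c → ℤ) j).natAbs ≤ 1 := by
          rcases b with _ | _
          · rw [if_neg (by simp)]
            rw [Pi.neg_apply, Int.natAbs_neg, Pi.single_apply]
            split_ifs <;> simp
          · rw [if_pos rfl, Pi.single_apply]
            split_ifs <;> simp
        have h2 := hv j
        have h3 := Int.natAbs_add_le ((if b then Pi.single i 1 else -Pi.single i (1:ℤ) : Fin c → ℤ) j)
          ((L.map (wimg c)).prod.v j)
        have h4 : 1 + l * Nat.choose (l + (j:ℕ)) (j:ℕ)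
            ≤ (l + 1) * Nat.choose (l + 1 + (j:ℕ)) (j:ℕ) := by
          have q1 : Nat.choose (l + (j:ℕ)) (j:ℕ) ≤ Nat.choose (l + 1 + (j:ℕ)) (j:ℕ) :=
            hchmono _
          have q2 : 0 < Nat.choose (l + 1 + (j:ℕ)) (j:ℕ) := hchpos _ _ (by omega)
          calc 1 + l * Nat.choose (l + (j:ℕ)) (j:ℕ)
              ≤ 1 * Nat.choose (l + 1 + (j:ℕ)) (j:ℕ)
                + l * Nat.choose (l + 1 + (j:ℕ)) (j:ℕ) := by
                apply Nat.add_le_add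
                · omega
                · exact Nat.mul_le_mul_left _ q1
            _ = (l + 1) * Nat.choose (l + 1 + (j:ℕ)) (j:ℕ) := by ring
        omega

lemma lift_eq_prod (c : ℕ) (w : FreeGroup (GcGen c)) :
    FreeGroup.lift (gens c) w = ((w.toWord).map (wimg c)).prod := by
  conv_lhs => rw [← FreeGroup.mk_toWord (x := w)]
  rw [FreeGroup.lift_mk]
  rfl

def jfin (c : ℕ) (h : 0 < c) : Fin c := ⟨c - 1, Nat.sub_lt h Nat.one_pos⟩

lemma zword_eq (c : ℕ) (h : 0 < c) : zword c = FreeGroup.of (some (jfin c h)) := dif_pos h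

lemma gdist_bound (c : ℕ) (h : 0 < c) (n : ℕ) (m : ℤ)
    (hd : gDist (GcRels c) ((PresentedGroup.mk (GcRels c)) (zword c) ^ m) ≤ n) :
    m.natAbs ≤ (n + c) ^ c := by
  set Z := (PresentedGroup.mk (GcRels c)) (zword c) with hZ
  have hSne : {k : ℕ | ∃ w : FreeGroup (GcGen c),
      (PresentedGroup.mk (GcRels c)) w = Z ^ m ∧ w.norm = k}.Nonempty := by
    obtain ⟨w0, hw0⟩ := PresentedGroup.mk_surjective (GcRels c) (Z ^ m)
    exact ⟨w0.norm, w0, hw0, rfl⟩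
  have hmem := Nat.sInf_mem hSne
  obtain ⟨w, hw, hnorm⟩ := hmem
  have hle : w.norm ≤ n := by
    rw [hnorm]; exact hd
  -- apply piM
  have hpi : FreeGroup.lift (gens c) w = MG.mk (m • Pi.single (jfin c h) (1:ℤ)) 0 := by
    have h1 : piM c ((PresentedGroup.mk (GcRels c)) w) = piM c (Z ^ m) := by rw [hw]
    rw [piM_mk] at h1
    rw [h1, hZ, map_zpow, zword_eq c h, piM_mk, FreeGroup.lift_apply_of]
    show (MG.mk (Pi.single (jfin c h) 1) 0) ^ m = _
    rw [MG_zpow]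
  have hb := (prod_bound c w.toWord).2 (jfin c h)
  rw [← lift_eq_prod, hpi] at hb
  have hv : ((MG.mk (m • Pi.single (jfin c h) (1:ℤ)) 0).v (jfin c h)) = m := by
    have e1 : ((MG.mk (m • Pi.single (jfin c h) (1:ℤ)) 0).v (jfin c h))
        = ((m • Pi.single (jfin c h) (1:ℤ) : Fin c → ℤ)) (jfin c h) := rfl
    rw [e1, Pi.smul_apply, Pi.single_eq_same, smul_eq_mul, mul_one]
  rw [hv] at hb
  have hlen : w.toWord.length = w.norm := rfl
  rw [hlen] at hb
  have hjv : ((jfin c h : Fin c) : ℕ) = c - 1 := rfl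
  rw [hjv] at hb
  calc m.natAbs ≤ w.norm * Nat.choose (w.norm + (c - 1)) (c - 1) := hb
    _ ≤ n * Nat.choose (n + (c - 1)) (c - 1) :=
        Nat.mul_le_mul hle (Nat.choose_le_choose _ (by omega))
    _ ≤ n * (n + (c - 1)) ^ (c - 1) := Nat.mul_le_mul_left _ (Nat.choose_le_pow _ _)
    _ ≤ (n + c) * (n + c) ^ (c - 1) :=
        Nat.mul_le_mul (by omega) (Nat.pow_le_pow_left (by omega) _)
    _ = (n + c) ^ (c - 1 + 1) := by rw [pow_succ, mul_comm]
    _ = (n + c) ^ c := by congr 1; omega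

def Xg (c : ℕ) (i : Fin c) : PresentedGroup (GcRels c) := PresentedGroup.of (some i)
def Tg (c : ℕ) : PresentedGroup (GcRels c) := PresentedGroup.of (none : GcGen c)

lemma rel_one (c : ℕ) {r : FreeGroup (GcGen c)} (hr : r ∈ GcRels c) :
    PresentedGroup.mk (GcRels c) r = 1 :=
  (QuotientGroup.eq_one_iff r).2 (Subgroup.subset_normalClosure hr)

lemma Xg_comm (c : ℕ) (i j : Fin c) : Commute (Xg c i) (Xg c j) := by
  have h := rel_one c (Or.inl ⟨i, j, rfl⟩)
  rw [map_commutatorElement] at h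
  exact commutatorElement_eq_one_iff_commute.1 h

lemma XT_comm (c : ℕ) (h : 0 < c) : Commute (Xg c (jfin c h)) (Tg c) := by
  have hr := rel_one c (Or.inr (Or.inl ⟨jfin c h, rfl, rfl⟩))
  rw [map_commutatorElement] at hr
  exact commutatorElement_eq_one_iff_commute.1 hr

lemma Xg_step (c : ℕ) (i j : Fin c) (hj : (j : ℕ) = (i : ℕ) + 1) :
    ⁅Xg c i, Tg c⁆ = Xg c j := by
  have hr := rel_one c (Or.inr (Or.inr ⟨i, j, hj, rfl⟩))
  rw [map_mul, map_inv, map_commutatorElement] at hr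
  have := mul_inv_eq_one.1 hr
  exact this

lemma conjT_X (c : ℕ) (i : Fin c) :
    Tg c * Xg c i * (Tg c)⁻¹
      = if hj : (i : ℕ) + 1 < c then (Xg c ⟨(i : ℕ) + 1, hj⟩)⁻¹ * Xg c i else Xg c i := by
  split_ifs with hj
  · have h := Xg_step c i ⟨(i : ℕ) + 1, hj⟩ rfl
    rw [commutatorElement_def] at h
    have h2 : Tg c * (Xg c i)⁻¹ * (Tg c)⁻¹ = (Xg c i)⁻¹ * Xg c ⟨(i : ℕ) + 1, hj⟩ := by
      rw [← h]; group
    have h3 : Tg c * Xg c i * (Tg c)⁻¹ = (Tg c * (Xg c i)⁻¹ * (Tg c)⁻¹)⁻¹ := by group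
    rw [h3, h2, mul_inv_rev, inv_inv]
  · have hic : (i : ℕ) = c - 1 := by have := i.2; omega
    have hpos : 0 < c := i.pos
    have hi : i = jfin c hpos := by
      rw [Fin.ext_iff]; exact hic
    rw [hi]
    have := (XT_comm c hpos).eq
    rw [show Tg c * Xg c (jfin c hpos) = Xg c (jfin c hpos) * Tg c from this.symm]
    group

def Kg (c : ℕ) : Subgroup (PresentedGroup (GcRels c)) := Subgroup.closure (Set.range (Xg c))

noncomputable instance KgCommGroup (c : ℕ) : CommGroup ↥(Kg c) :=
  { (inferInstance : Group ↥(Kg c)) with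
    mul_comm := by
      rintro ⟨a, ha⟩ ⟨b, hb⟩
      apply Subtype.ext
      show a * b = b * a
      refine Subgroup.closure_induction₂ ?_ ?_ ?_ ?_ ?_ ?_ ?_ ha hb
      · rintro x y ⟨i, rfl⟩ ⟨j, rfl⟩
        exact (Xg_comm c i j).eq
      · intro x _; rw [one_mul, mul_one]
      · intro x _; rw [one_mul, mul_one]
      · intro x y z _ _ _ h1 h2
        rw [mul_assoc, h2, ← mul_assoc, h1, mul_assoc]
      · intro y z x _ _ _ h1 h2
        rw [← mul_assoc, h1, mul_assoc, h2, ← mul_assoc]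
      · intro x y _ _ h
        exact (Commute.inv_left h).eq
      · intro x y _ _ h
        exact (Commute.inv_right h).eq }

def XK (c : ℕ) (i : Fin c) : ↥(Kg c) := ⟨Xg c i, Subgroup.subset_closure ⟨i, rfl⟩⟩

noncomputable def Pfun (c : ℕ) (v : Fin c → ℤ) : ↥(Kg c) := ∏ i, XK c i ^ (v i)

lemma Pfun_add (c : ℕ) (v w : Fin c → ℤ) : Pfun c (v + w) = Pfun c v * Pfun c w := by
  rw [Pfun, Pfun, Pfun, ← Finset.prod_mul_distrib]
  apply Finset.prod_congr rfl
  intro i _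
  rw [Pi.add_apply, zpow_add]

lemma Pfun_zero (c : ℕ) : Pfun c 0 = 1 := by
  rw [Pfun]
  apply Finset.prod_eq_one
  intro i _
  rw [Pi.zero_apply, zpow_zero]

lemma Pfun_neg (c : ℕ) (v : Fin c → ℤ) : Pfun c (-v) = (Pfun c v)⁻¹ := by
  rw [eq_inv_iff_mul_eq_one, ← Pfun_add, neg_add_cancel, Pfun_zero]

lemma Pfun_single (c : ℕ) (i : Fin c) (m : ℤ) :
    Pfun c (Pi.single i m) = XK c i ^ m := by
  rw [Pfun, Finset.prod_eq_single i
    (fun j _ hj => by rw [Pi.single_eq_of_ne hj, zpow_zero])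
    (fun h => absurd (Finset.mem_univ i) h), Pi.single_eq_same]

lemma Pfun_sum (c : ℕ) {ι : Type*} (s : Finset ι) (f : ι → (Fin c → ℤ)) :
    Pfun c (∑ i ∈ s, f i) = ∏ i ∈ s, Pfun c (f i) := by
  classical
  induction s using Finset.induction_on with
  | empty => simp [Pfun_zero]
  | insert _ _ hx ih =>
    rw [Finset.sum_insert hx, Finset.prod_insert hx, Pfun_add, ih]

lemma Pfun_zsmul (c : ℕ) (m : ℤ) (v : Fin c → ℤ) :
    Pfun c (m • v) = (Pfun c v) ^ m := by
  rw [Pfun, Pfun, ← Finset.prod_zpow]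
  apply Finset.prod_congr rfl
  intro i _
  rw [Pi.smul_apply, smul_eq_mul, ← zpow_mul, mul_comm]

lemma Tconj_mem (c : ℕ) (g : PresentedGroup (GcRels c)) (hg : g ∈ Kg c) :
    Tg c * g * (Tg c)⁻¹ ∈ Kg c := by
  induction hg using Subgroup.closure_induction with
  | mem x hx =>
    obtain ⟨i, rfl⟩ := hx
    rw [conjT_X]
    split_ifs with hj
    · exact mul_mem (inv_mem (Subgroup.subset_closure ⟨_, rfl⟩))
        (Subgroup.subset_closure ⟨i, rfl⟩)
    · exact Subgroup.subset_closure ⟨i, rfl⟩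
  | one => simpa using one_mem (Kg c)
  | mul x y hx hy px py =>
    have hxy : Tg c * (x * y) * (Tg c)⁻¹
        = (Tg c * x * (Tg c)⁻¹) * (Tg c * y * (Tg c)⁻¹) := by group
    rw [hxy]
    exact mul_mem px py
  | inv x hx px =>
    have hxi : Tg c * x⁻¹ * (Tg c)⁻¹ = (Tg c * x * (Tg c)⁻¹)⁻¹ := by group
    rw [hxi]
    exact inv_mem px

noncomputable def psiT (c : ℕ) : ↥(Kg c) →* ↥(Kg c) where
  toFun a := ⟨Tg c * ↑a * (Tg c)⁻¹, Tconj_mem c ↑a a.2⟩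
  map_one' := by
    apply Subtype.ext
    show Tg c * ↑(1 : ↥(Kg c)) * (Tg c)⁻¹ = ↑(1 : ↥(Kg c))
    rw [OneMemClass.coe_one, mul_one, mul_inv_cancel]
  map_mul' a b := by
    apply Subtype.ext
    show Tg c * ↑(a * b) * (Tg c)⁻¹ = (Tg c * ↑a * (Tg c)⁻¹) * (Tg c * ↑b * (Tg c)⁻¹)
    rw [MulMemClass.coe_mul]
    group

lemma psiT_apply_coe (c : ℕ) (a : ↥(Kg c)) :
    (↑(psiT c a) : PresentedGroup (GcRels c)) = Tg c * ↑a * (Tg c)⁻¹ := rfl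

lemma single_smul_one (c : ℕ) (i : Fin c) (m : ℤ) :
    m • (Pi.single i (1 : ℤ) : Fin c → ℤ) = Pi.single i m := by
  funext l
  rw [Pi.smul_apply, Pi.single_apply, Pi.single_apply, smul_eq_mul]
  split_ifs <;> ring

lemma psiT_XK (c : ℕ) (i : Fin c) :
    psiT c (XK c i) = Pfun c (sigFun c (Pi.single i 1)) := by
  apply Subtype.ext
  rw [psiT_apply_coe]
  show Tg c * Xg c i * (Tg c)⁻¹ = _
  rw [conjT_X]
  split_ifs with hj
  · have hsig : sigFun c (Pi.single i (1:ℤ))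
        = Pi.single i 1 + (-(Pi.single (⟨(i:ℕ)+1, hj⟩ : Fin c) 1)) := by
      funext l
      rw [sigFun_single_apply, Pi.add_apply, Pi.neg_apply, Pi.single_apply, Pi.single_apply]
      have : ((l : ℕ) = (i : ℕ) + 1) ↔ (l = (⟨(i:ℕ)+1, hj⟩ : Fin c)) := by
        rw [Fin.ext_iff]
      by_cases hcase : (l : ℕ) = (i : ℕ) + 1
      · rw [if_pos hcase, if_pos (this.1 hcase)]; ring
      · rw [if_neg hcase, if_neg (fun hh => hcase (this.2 hh))]; ring
    rw [hsig, Pfun_add, Pfun_neg, Pfun_single, Pfun_single, zpow_one, zpow_one]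
    rw [MulMemClass.coe_mul]
    have hcomm := (Xg_comm c i ⟨(i:ℕ)+1, hj⟩).inv_right.eq
    show (Xg c ⟨(i:ℕ)+1, hj⟩)⁻¹ * Xg c i = Xg c i * ↑((XK c ⟨(i:ℕ)+1, hj⟩)⁻¹)
    rw [← hcomm]
    rfl
  · have hsig : sigFun c (Pi.single i (1:ℤ)) = Pi.single i 1 := by
      funext l
      rw [sigFun_single_apply, Pi.single_apply]
      have : ¬ ((l : ℕ) = (i : ℕ) + 1) := by have := l.2; omega
      rw [if_neg this]
      ring
    rw [hsig, Pfun_single, zpow_one]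
    rfl

lemma psiT_P (c : ℕ) (v : Fin c → ℤ) :
    psiT c (Pfun c v) = Pfun c (sigFun c v) := by
  have hv : v = ∑ i, Pi.single i (v i) := (Finset.univ_sum_single v).symm
  calc psiT c (Pfun c v)
      = psiT c (Pfun c (∑ i, Pi.single i (v i))) := by rw [← hv]
    _ = psiT c (∏ i, Pfun c (Pi.single i (v i))) := by rw [Pfun_sum]
    _ = ∏ i, psiT c (Pfun c (Pi.single i (v i))) := by rw [map_prod]
    _ = ∏ i, Pfun c (sigFun c (Pi.single i (v i))) := by
        apply Finset.prod_congr rfl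
        intro i _
        rw [← single_smul_one c i (v i), Pfun_zsmul, map_zpow,
          show Pfun c (Pi.single i 1) = XK c i from by rw [Pfun_single, zpow_one],
          psiT_XK, ← Pfun_zsmul]
        congr 1
        show (v i) • (sigAut c) (Pi.single i 1) = (sigAut c) ((v i) • Pi.single i 1)
        rw [map_zsmul]
    _ = Pfun c (∑ i, sigFun c (Pi.single i (v i))) := by rw [Pfun_sum]
    _ = Pfun c (sigFun c v) := by
        congr 1
        show ∑ i, (sigAut c) (Pi.single i (v i)) = (sigAut c) v
        rw [← map_sum, ← hv]

lemma conjT_P (c : ℕ) (v : Fin c → ℤ) :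
    Tg c * ↑(Pfun c v) = (↑(Pfun c (sigFun c v)) : PresentedGroup (GcRels c)) * Tg c := by
  have h := congrArg (Subtype.val) (psiT_P c v)
  rw [psiT_apply_coe] at h
  rw [← h]
  group

lemma conjTn_P (c : ℕ) (k : ℕ) (v : Fin c → ℤ) :
    (Tg c) ^ k * ↑(Pfun c v)
      = (↑(Pfun c ((sigAut c ^ k) v)) : PresentedGroup (GcRels c)) * (Tg c) ^ k := by
  induction k with
  | zero =>
    have h0 : (sigAut c ^ (0:ℕ)) v = v := rfl
    rw [h0, pow_zero, one_mul, mul_one]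
  | succ k ih =>
    have h1 : (sigAut c ^ (k+1)) v = sigFun c ((sigAut c ^ k) v) := by
      rw [pow_succ']
      rfl
    rw [h1, pow_succ', mul_assoc, ih, ← mul_assoc, conjT_P, mul_assoc, ← pow_succ']

lemma commP (c : ℕ) (k : ℕ) (v : Fin c → ℤ) :
    ⁅(↑(Pfun c v) : PresentedGroup (GcRels c)), (Tg c) ^ k⁆
      = ↑(Pfun c (v - (sigAut c ^ k) v)) := by
  rw [commutatorElement_def]
  have hinv : (↑(Pfun c v) : PresentedGroup (GcRels c))⁻¹ = ↑(Pfun c (-v)) := by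
    rw [Pfun_neg]
    rfl
  rw [hinv]
  have h := conjTn_P c k (-v)
  calc ↑(Pfun c v) * (Tg c) ^ k * ↑(Pfun c (-v)) * ((Tg c) ^ k)⁻¹
      = ↑(Pfun c v) * ((Tg c) ^ k * ↑(Pfun c (-v))) * ((Tg c) ^ k)⁻¹ := by group
    _ = ↑(Pfun c v) * (↑(Pfun c ((sigAut c ^ k) (-v))) * (Tg c) ^ k) * ((Tg c) ^ k)⁻¹ := by
        rw [h]
    _ = ↑(Pfun c v) * ↑(Pfun c ((sigAut c ^ k) (-v))) := by group
    _ = ↑(Pfun c v * Pfun c ((sigAut c ^ k) (-v))) := rfl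
    _ = ↑(Pfun c (v - (sigAut c ^ k) v)) := by
        rw [← Pfun_add]
        congr 2
        rw [map_neg]
        abel

lemma sig_pres1 (c : ℕ) (v : Fin c → ℤ) (j : ℕ) (hs : ∀ l : Fin c, (l : ℕ) < j → v l = 0) :
    ∀ l : Fin c, (l : ℕ) ≤ j → sigFun c v l = v l := by
  intro l hl
  show v l - _ = v l
  rcases Nat.eq_zero_or_pos (l : ℕ) with h0 | h0
  · rw [if_neg (by omega), sub_zero]
  · rw [if_pos h0]
    have hl1 : (l : ℕ) - 1 < c := lt_of_le_of_lt (Nat.sub_le _ _) l.2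
    rw [vext_lt _ hl1, hs ⟨(l : ℕ) - 1, hl1⟩ (by simp; omega), sub_zero]

lemma sig_supp1 (c : ℕ) (v : Fin c → ℤ) (j : ℕ) (hs : ∀ l : Fin c, (l : ℕ) < j → v l = 0) :
    ∀ l : Fin c, (l : ℕ) < j → sigFun c v l = 0 := by
  intro l hl
  rw [sig_pres1 c v j hs l (le_of_lt hl)]
  exact hs l hl

lemma sig_pow_pres (c : ℕ) (j : ℕ) :
    ∀ (k : ℕ) (v : Fin c → ℤ), (∀ l : Fin c, (l : ℕ) < j → v l = 0) →
      ∀ l : Fin c, (l : ℕ) ≤ j → (sigAut c ^ k) v l = v l := by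
  intro k
  induction k with
  | zero => intro v _ l _; rfl
  | succ k ih =>
    intro v hs l hl
    have hstep : (sigAut c ^ (k + 1)) v = (sigAut c ^ k) (sigFun c v) := by
      rw [pow_succ]; rfl
    rw [hstep, ih (sigFun c v) (sig_supp1 c v j hs) l hl, sig_pres1 c v j hs l hl]

lemma sig_pow_next (c : ℕ) (j : ℕ) (ljp : Fin c) (hjp : (ljp : ℕ) = j + 1)
    (lj : Fin c) (hlj : (lj : ℕ) = j) :
    ∀ (k : ℕ) (v : Fin c → ℤ), (∀ l : Fin c, (l : ℕ) < j → v l = 0) →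
      (sigAut c ^ k) v ljp = v ljp - (k : ℤ) * v lj := by
  intro k
  induction k with
  | zero => intro v _; show v ljp = _; push_cast; ring
  | succ k ih =>
    intro v hs
    have hstep : (sigAut c ^ (k + 1)) v = (sigAut c ^ k) (sigFun c v) := by
      rw [pow_succ]; rfl
    rw [hstep, ih (sigFun c v) (sig_supp1 c v j hs)]
    have h1 : sigFun c v ljp = v ljp - v lj := by
      show v ljp - _ = _
      rw [if_pos (by omega)]
      have hl1 : (ljp : ℕ) - 1 < c := lt_of_le_of_lt (Nat.sub_le _ _) ljp.2
      rw [vext_lt _ hl1]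
      congr 2
      rw [Fin.ext_iff]
      simp
      omega
    have h2 : sigFun c v lj = v lj := sig_pres1 c v j hs lj (le_of_eq hlj)
    rw [h1, h2]
    push_cast
    ring

def vs (c : ℕ) (h : 0 < c) (n : ℕ) : ℕ → (Fin c → ℤ)
  | 0 => Pi.single (⟨0, h⟩ : Fin c) (n : ℤ)
  | j + 1 => vs c h n j - (sigAut c ^ n) (vs c h n j)

lemma vs_supp (c : ℕ) (h : 0 < c) (n : ℕ) :
    ∀ j, ∀ l : Fin c, (l : ℕ) < j → vs c h n j l = 0 := by
  intro j
  induction j with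
  | zero => intro l hl; omega
  | succ j ih =>
    intro l hl
    show vs c h n j l - (sigAut c ^ n) (vs c h n j) l = 0
    rw [sig_pow_pres c j n (vs c h n j) ih l (by omega)]
    ring

lemma vs_val (c : ℕ) (h : 0 < c) (n : ℕ) :
    ∀ j, ∀ lj : Fin c, (lj : ℕ) = j → vs c h n j lj = (n : ℤ) ^ (j + 1) := by
  intro j
  induction j with
  | zero =>
    intro lj hlj
    have : lj = (⟨0, h⟩ : Fin c) := by rw [Fin.ext_iff]; exact hlj
    rw [this]
    show Pi.single _ _ _ = _
    rw [Pi.single_eq_same, pow_one]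
  | succ j ih =>
    intro lj hlj
    have hjc : j < c := by have := lj.2; omega
    have hlj' : ((⟨j, hjc⟩ : Fin c) : ℕ) = j := rfl
    show vs c h n j lj - (sigAut c ^ n) (vs c h n j) lj = _
    rw [sig_pow_next c j lj hlj ⟨j, hjc⟩ hlj' n (vs c h n j) (vs_supp c h n j),
      ih ⟨j, hjc⟩ hlj']
    ring

lemma vs_final (c : ℕ) (h : 0 < c) (n : ℕ) :
    vs c h n (c - 1) = Pi.single (jfin c h) ((n : ℤ) ^ c) := by
  funext l
  by_cases hl : (l : ℕ) = c - 1
  · have : l = jfin c h := by rw [Fin.ext_iff]; exact hl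
    rw [this, Pi.single_eq_same]
    have := vs_val c h n (c - 1) (jfin c h) rfl
    rw [this]
    congr 1
    omega
  · have hlt : (l : ℕ) < c - 1 := by have := l.2; omega
    rw [vs_supp c h n (c - 1) l hlt, Pi.single_eq_of_ne (fun he => hl (by rw [he]; rfl))]

def ws (c : ℕ) (h : 0 < c) (n : ℕ) : ℕ → FreeGroup (GcGen c)
  | 0 => (FreeGroup.of (some (⟨0, h⟩ : Fin c))) ^ n
  | j + 1 => ⁅ws c h n j, (FreeGroup.of (none : GcGen c)) ^ n⁆

lemma mk_ws (c : ℕ) (h : 0 < c) (n : ℕ) :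
    ∀ j, PresentedGroup.mk (GcRels c) (ws c h n j) = ↑(Pfun c (vs c h n j)) := by
  intro j
  induction j with
  | zero =>
    show PresentedGroup.mk (GcRels c) ((FreeGroup.of (some (⟨0, h⟩ : Fin c))) ^ n) = _
    rw [map_pow]
    show (Xg c ⟨0, h⟩) ^ n = _
    have : Pfun c (vs c h n 0) = XK c ⟨0, h⟩ ^ ((n : ℕ) : ℤ) := by
      show Pfun c (Pi.single (⟨0, h⟩ : Fin c) (n : ℤ)) = _
      rw [Pfun_single]
    rw [this, zpow_natCast]
    rfl
  | succ j ih =>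
    show PresentedGroup.mk (GcRels c) ⁅ws c h n j, (FreeGroup.of (none : GcGen c)) ^ n⁆ = _
    rw [map_commutatorElement, ih, map_pow]
    show ⁅(↑(Pfun c (vs c h n j)) : PresentedGroup (GcRels c)), (Tg c) ^ n⁆ = _
    rw [commP]
    rfl

lemma norm_pow_le {α : Type*} [DecidableEq α] (x : FreeGroup α) (n : ℕ) :
    (x ^ n).norm ≤ n * x.norm := by
  induction n with
  | zero => simp [FreeGroup.norm_one]
  | succ n ih =>
    rw [pow_succ]
    calc (x ^ n * x).norm ≤ (x ^ n).norm + x.norm := FreeGroup.norm_mul_le _ _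
      _ ≤ n * x.norm + x.norm := by omega
      _ = (n + 1) * x.norm := by ring

lemma norm_ws (c : ℕ) (h : 0 < c) (n : ℕ) :
    ∀ j, (ws c h n j).norm ≤ 4 ^ (j + 1) * n := by
  intro j
  induction j with
  | zero =>
    calc (ws c h n 0).norm ≤ n * (FreeGroup.of (some (⟨0, h⟩ : Fin c))).norm :=
        norm_pow_le _ n
      _ = n := by rw [FreeGroup.norm_of, mul_one]
      _ ≤ 4 ^ 1 * n := by omega
  | succ j ih =>
    have htn : ((FreeGroup.of (none : GcGen c)) ^ n).norm ≤ n := by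
      calc _ ≤ n * (FreeGroup.of (none : GcGen c)).norm := norm_pow_le _ n
        _ = n := by rw [FreeGroup.norm_of, mul_one]
    have hcomm : (⁅ws c h n j, (FreeGroup.of (none : GcGen c)) ^ n⁆).norm
        ≤ 2 * (ws c h n j).norm + 2 * ((FreeGroup.of (none : GcGen c)) ^ n).norm := by
      rw [commutatorElement_def]
      calc (ws c h n j * (FreeGroup.of (none : GcGen c)) ^ n * (ws c h n j)⁻¹
            * ((FreeGroup.of (none : GcGen c)) ^ n)⁻¹).norm
          ≤ (ws c h n j * (FreeGroup.of (none : GcGen c)) ^ n * (ws c h n j)⁻¹).norm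
            + ((FreeGroup.of (none : GcGen c)) ^ n)⁻¹.norm := FreeGroup.norm_mul_le _ _
        _ ≤ (ws c h n j * (FreeGroup.of (none : GcGen c)) ^ n).norm + (ws c h n j)⁻¹.norm
            + ((FreeGroup.of (none : GcGen c)) ^ n)⁻¹.norm := by
            have := FreeGroup.norm_mul_le (ws c h n j * (FreeGroup.of (none : GcGen c)) ^ n)
              (ws c h n j)⁻¹
            omega
        _ ≤ (ws c h n j).norm + ((FreeGroup.of (none : GcGen c)) ^ n).norm
            + (ws c h n j)⁻¹.norm + ((FreeGroup.of (none : GcGen c)) ^ n)⁻¹.norm := by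
            have := FreeGroup.norm_mul_le (ws c h n j) ((FreeGroup.of (none : GcGen c)) ^ n)
            omega
        _ = 2 * (ws c h n j).norm + 2 * ((FreeGroup.of (none : GcGen c)) ^ n).norm := by
            rw [FreeGroup.norm_inv_eq, FreeGroup.norm_inv_eq]
            ring
    have h4 : (1 : ℕ) ≤ 4 ^ (j + 1) := Nat.one_le_pow _ _ (by omega)
    calc (ws c h n (j + 1)).norm
        ≤ 2 * (ws c h n j).norm + 2 * ((FreeGroup.of (none : GcGen c)) ^ n).norm := hcomm
      _ ≤ 2 * (4 ^ (j + 1) * n) + 2 * n := by omega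
      _ ≤ 4 ^ (j + 2) * n := by
          have : 4 ^ (j + 2) = 4 * 4 ^ (j + 1) := by rw [pow_succ, mul_comm]
          rw [this]
          nlinarith

lemma gdist_lower (c : ℕ) (h : 0 < c) (n : ℕ) :
    gDist (GcRels c) ((PresentedGroup.mk (GcRels c)) (zword c) ^ ((n ^ c : ℕ) : ℤ))
      ≤ 4 ^ c * n := by
  have hmk : PresentedGroup.mk (GcRels c) (ws c h n (c - 1))
      = (PresentedGroup.mk (GcRels c)) (zword c) ^ ((n ^ c : ℕ) : ℤ) := by
    rw [mk_ws c h n (c - 1), vs_final c h n]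
    have : Pfun c (Pi.single (jfin c h) ((n : ℤ) ^ c)) = XK c (jfin c h) ^ ((n : ℤ) ^ c) :=
      Pfun_single c _ _
    rw [this]
    rw [zword_eq c h]
    show ((XK c (jfin c h) ^ ((n : ℤ) ^ c) : ↥(Kg c)) : PresentedGroup (GcRels c)) = _
    rw [SubgroupClass.coe_zpow]
    show (Xg c (jfin c h)) ^ ((n : ℤ) ^ c) = (Xg c (jfin c h)) ^ ((n ^ c : ℕ) : ℤ)
    norm_cast
  have hmem : (ws c h n (c - 1)).norm ∈ {k : ℕ | ∃ w : FreeGroup (GcGen c),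
      (PresentedGroup.mk (GcRels c)) w
        = (PresentedGroup.mk (GcRels c)) (zword c) ^ ((n ^ c : ℕ) : ℤ) ∧ w.norm = k} :=
    ⟨ws c h n (c - 1), hmk, rfl⟩
  calc gDist (GcRels c) _ ≤ (ws c h n (c - 1)).norm := Nat.sInf_le hmem
    _ ≤ 4 ^ ((c - 1) + 1) * n := norm_ws c h n (c - 1)
    _ = 4 ^ c * n := by congr 2; omega

lemma gdist_pow_le (c : ℕ) (h : 0 < c) (M : ℕ) :
    gDist (GcRels c) ((PresentedGroup.mk (GcRels c)) (zword c) ^ ((M : ℕ) : ℤ)) ≤ M := by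
  have hmk : PresentedGroup.mk (GcRels c) ((FreeGroup.of (some (jfin c h))) ^ M)
      = (PresentedGroup.mk (GcRels c)) (zword c) ^ ((M : ℕ) : ℤ) := by
    rw [map_pow, zword_eq c h, zpow_natCast]
  have hmem : ((FreeGroup.of (some (jfin c h))) ^ M).norm ∈ {k : ℕ | ∃ w,
      (PresentedGroup.mk (GcRels c)) w
        = (PresentedGroup.mk (GcRels c)) (zword c) ^ ((M : ℕ) : ℤ) ∧ w.norm = k} :=
    ⟨_, hmk, rfl⟩
  calc gDist (GcRels c) _ ≤ ((FreeGroup.of (some (jfin c h))) ^ M).norm := Nat.sInf_le hmem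
    _ ≤ M * (FreeGroup.of (some (jfin c h))).norm := norm_pow_le _ _
    _ = M := by rw [FreeGroup.norm_of, mul_one]

lemma Z_inj (c : ℕ) (h : 0 < c) (m1 m2 : ℤ)
    (he : (PresentedGroup.mk (GcRels c)) (zword c) ^ m1
        = (PresentedGroup.mk (GcRels c)) (zword c) ^ m2) : m1 = m2 := by
  have hh := congrArg (piM c) he
  rw [map_zpow, map_zpow, piM_mk, zword_eq c h, FreeGroup.lift_apply_of] at hh
  have hg : gens c (some (jfin c h)) = MG.mk (Pi.single (jfin c h) 1) 0 := rfl
  rw [hg, MG_zpow, MG_zpow] at hh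
  have hv := congrArg MG.v hh
  have := congr_fun hv (jfin c h)
  have e1 : ((m1 • Pi.single (jfin c h) (1:ℤ) : Fin c → ℤ)) (jfin c h) = m1 := by
    rw [Pi.smul_apply, Pi.single_eq_same, smul_eq_mul, mul_one]
  have e2 : ((m2 • Pi.single (jfin c h) (1:ℤ) : Fin c → ℤ)) (jfin c h) = m2 := by
    rw [Pi.smul_apply, Pi.single_eq_same, smul_eq_mul, mul_one]
  have this2 : ((m1 • Pi.single (jfin c h) (1:ℤ) : Fin c → ℤ)) (jfin c h)
      = ((m2 • Pi.single (jfin c h) (1:ℤ) : Fin c → ℤ)) (jfin c h) := this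
  rw [e1, e2] at this2
  exact this2

lemma Hsub_eq (c : ℕ) (h : 0 < c) :
    Hsub (GcRels c) (Bz c)
      = Subgroup.zpowers ((PresentedGroup.mk (GcRels c)) (zword c)) := by
  have hset : (PresentedGroup.mk (GcRels c)) '' (FreeGroup.of '' Bz c)
      = {(PresentedGroup.mk (GcRels c)) (zword c)} := by
    apply Set.eq_singleton_iff_unique_mem.2
    constructor
    · refine ⟨FreeGroup.of (some (jfin c h)), ⟨some (jfin c h), ⟨jfin c h, rfl, rfl⟩, rfl⟩, ?_⟩
      rw [zword_eq c h]
    · rintro y ⟨w, ⟨a, ⟨i, hi, rfl⟩, rfl⟩, rfl⟩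
      rw [zword_eq c h]
      have : i = jfin c h := by rw [Fin.ext_iff]; exact hi
      rw [this]
  rw [Hsub, hset, ← Subgroup.zpowers_eq_closure]

noncomputable def esum (c : ℕ) : FreeGroup ↥(Bz c) →* Multiplicative ℤ :=
  FreeGroup.lift (fun _ => Multiplicative.ofAdd (1 : ℤ))

lemma Fof (c : ℕ) (h : 0 < c) (b : ↥(Bz c)) :
    ((PresentedGroup.mk (GcRels c)).comp
        (FreeGroup.map (Subtype.val : ↥(Bz c) → GcGen c))) (FreeGroup.of b)
      = (PresentedGroup.mk (GcRels c)) (zword c) := by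
  obtain ⟨a, i, hi, rfl⟩ := b
  rw [MonoidHom.comp_apply, FreeGroup.map.of]
  show (PresentedGroup.mk (GcRels c)) (FreeGroup.of (some i)) = _
  rw [zword_eq c h]
  have : i = jfin c h := by rw [Fin.ext_iff]; exact hi
  rw [this]

lemma F_eq (c : ℕ) (h : 0 < c) (w : FreeGroup ↥(Bz c)) :
    ((PresentedGroup.mk (GcRels c)).comp
        (FreeGroup.map (Subtype.val : ↥(Bz c) → GcGen c))) w
      = (PresentedGroup.mk (GcRels c)) (zword c) ^ ((esum c w).toAdd) := by
  have hhom : ((PresentedGroup.mk (GcRels c)).comp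
        (FreeGroup.map (Subtype.val : ↥(Bz c) → GcGen c)))
      = (zpowersHom _ ((PresentedGroup.mk (GcRels c)) (zword c))).comp (esum c) := by
    apply FreeGroup.ext_hom
    intro b
    rw [Fof c h b, MonoidHom.comp_apply]
    show _ = ((PresentedGroup.mk (GcRels c)) (zword c))
      ^ ((esum c (FreeGroup.of b)).toAdd)
    rw [esum, FreeGroup.lift_apply_of]
    rw [show (Multiplicative.ofAdd (1:ℤ)).toAdd = 1 from rfl, zpow_one]
  rw [hhom, MonoidHom.comp_apply]
  rfl

lemma esum_bound (c : ℕ) (w : FreeGroup ↥(Bz c)) :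
    ((esum c w).toAdd).natAbs ≤ w.norm := by
  have hlist : ∀ L : List (↥(Bz c) × Bool),
      (((L.map fun x => cond x.2 (Multiplicative.ofAdd (1:ℤ))
        (Multiplicative.ofAdd (1:ℤ))⁻¹).prod).toAdd).natAbs ≤ L.length := by
    intro L
    induction L with
    | nil => simp
    | cons a L ih =>
      rw [List.map_cons, List.prod_cons]
      have hsplit : (((cond a.2 (Multiplicative.ofAdd (1:ℤ)) (Multiplicative.ofAdd (1:ℤ))⁻¹)
          * ((L.map fun x => cond x.2 (Multiplicative.ofAdd (1:ℤ))
            (Multiplicative.ofAdd (1:ℤ))⁻¹).prod)).toAdd)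
          = (cond a.2 (Multiplicative.ofAdd (1:ℤ)) (Multiplicative.ofAdd (1:ℤ))⁻¹).toAdd
            + (((L.map fun x => cond x.2 (Multiplicative.ofAdd (1:ℤ))
              (Multiplicative.ofAdd (1:ℤ))⁻¹).prod).toAdd) := rfl
      rw [hsplit]
      have h1 : ((cond a.2 (Multiplicative.ofAdd (1:ℤ))
          (Multiplicative.ofAdd (1:ℤ))⁻¹).toAdd).natAbs ≤ 1 := by
        rcases a with ⟨x, b⟩
        rcases b with _ | _ <;> simp
      have h2 := Int.natAbs_add_le
        ((cond a.2 (Multiplicative.ofAdd (1:ℤ)) (Multiplicative.ofAdd (1:ℤ))⁻¹).toAdd)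
        (((L.map fun x => cond x.2 (Multiplicative.ofAdd (1:ℤ))
          (Multiplicative.ofAdd (1:ℤ))⁻¹).prod).toAdd)
      have h3 : (a :: L).length = L.length + 1 := rfl
      omega
  have hw : esum c w = (w.toWord.map fun x => cond x.2 (Multiplicative.ofAdd (1:ℤ))
      (Multiplicative.ofAdd (1:ℤ))⁻¹).prod := by
    conv_lhs => rw [← FreeGroup.mk_toWord (x := w)]
    rw [esum, FreeGroup.lift_mk]
  rw [hw]
  exact hlist w.toWord

lemma norm_zpow_le {α : Type*} [DecidableEq α] (x : FreeGroup α) (m : ℤ) :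
    (x ^ m).norm ≤ m.natAbs * x.norm := by
  rcases m with n | n
  · rw [Int.ofNat_eq_coe, zpow_natCast]
    exact le_trans (norm_pow_le x n) (by simp)
  · rw [zpow_negSucc, FreeGroup.norm_inv_eq]
    exact le_trans (norm_pow_le x (n + 1)) (by simp [Int.natAbs])

lemma subDist_zpow (c : ℕ) (h : 0 < c) (m : ℤ) :
    subDist (GcRels c) (Bz c) ((PresentedGroup.mk (GcRels c)) (zword c) ^ m)
      = m.natAbs := by
  set F := ((PresentedGroup.mk (GcRels c)).comp
    (FreeGroup.map (Subtype.val : ↥(Bz c) → GcGen c))) with hF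
  set Z := (PresentedGroup.mk (GcRels c)) (zword c) with hZ
  have bzmem : (some (jfin c h) : GcGen c) ∈ Bz c := ⟨jfin c h, rfl, rfl⟩
  set bz : ↥(Bz c) := ⟨some (jfin c h), bzmem⟩ with hbz
  have hwit : F ((FreeGroup.of bz) ^ m) = Z ^ m := by
    rw [map_zpow, Fof c h bz]
  have hmem : ((FreeGroup.of bz) ^ m).norm
      ∈ {k : ℕ | ∃ w, F w = Z ^ m ∧ w.norm = k} := ⟨_, hwit, rfl⟩
  apply le_antisymm
  · calc subDist (GcRels c) (Bz c) (Z ^ m) ≤ ((FreeGroup.of bz) ^ m).norm :=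
        Nat.sInf_le hmem
      _ ≤ m.natAbs * (FreeGroup.of bz).norm := norm_zpow_le _ _
      _ = m.natAbs := by rw [FreeGroup.norm_of, mul_one]
  · apply le_csInf ⟨_, hmem⟩
    rintro k ⟨w, hwk, rfl⟩
    have he : Z ^ ((esum c w).toAdd) = Z ^ m := by
      rw [← F_eq c h w, hwk]
    have := Z_inj c h _ _ he
    rw [← this]
    exact esum_bound c w

noncomputable def f2 (c : ℕ) (n : ℕ) : ℕ :=
  sSup {k : ℕ | ∃ m : ℤ, m.natAbs = k ∧
    gDist (GcRels c) (PresentedGroup.mk (GcRels c) (zword c) ^ m) ≤ n}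

lemma S2_ub (c : ℕ) (h : 0 < c) (n : ℕ) :
    ∀ k ∈ {k : ℕ | ∃ m : ℤ, m.natAbs = k ∧
      gDist (GcRels c) (PresentedGroup.mk (GcRels c) (zword c) ^ m) ≤ n},
      k ≤ (n + c) ^ c := by
  rintro k ⟨m, rfl, hd⟩
  exact gdist_bound c h n m hd

lemma S2_ne (c : ℕ) (n : ℕ) :
    (0 : ℕ) ∈ {k : ℕ | ∃ m : ℤ, m.natAbs = k ∧
      gDist (GcRels c) (PresentedGroup.mk (GcRels c) (zword c) ^ m) ≤ n} := by
  refine ⟨0, rfl, ?_⟩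
  rw [zpow_zero]
  have hz : (0 : ℕ) ∈ {k : ℕ | ∃ w : FreeGroup (GcGen c),
      (PresentedGroup.mk (GcRels c)) w = 1 ∧ w.norm = k} :=
    ⟨1, map_one _, FreeGroup.norm_one⟩
  calc gDist (GcRels c) 1 ≤ 0 := Nat.sInf_le hz
    _ ≤ n := Nat.zero_le n

lemma f2_le (c : ℕ) (h : 0 < c) (n : ℕ) : f2 c n ≤ (n + c) ^ c :=
  csSup_le ⟨0, S2_ne c n⟩ (S2_ub c h n)

lemma f2_lower (c : ℕ) (h : 0 < c) (n : ℕ) : n ^ c ≤ f2 c (4 ^ c * n + 1) := by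
  apply le_csSup ⟨((4 ^ c * n + 1) + c) ^ c, S2_ub c h _⟩
  refine ⟨((n ^ c : ℕ) : ℤ), Int.natAbs_natCast _, ?_⟩
  have := gdist_lower c h n
  omega

lemma f2_ge_self (c : ℕ) (h : 0 < c) (M : ℕ) : M ≤ f2 c M := by
  apply le_csSup ⟨(M + c) ^ c, S2_ub c h _⟩
  exact ⟨(M : ℤ), Int.natAbs_natCast _, gdist_pow_le c h M⟩

lemma dist_eq (c : ℕ) (h : 0 < c) (n : ℕ) :
    distortion (GcRels c) (Bz c) n = f2 c n / n := by
  rw [distortion, f2]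
  congr 1
  congr 1
  ext k
  constructor
  · rintro ⟨g, hgH, hgd, hsd⟩
    rw [Hsub_eq c h] at hgH
    obtain ⟨m, rfl⟩ := Subgroup.mem_zpowers_iff.1 hgH
    exact ⟨m, by rw [← hsd, subDist_zpow c h m], hgd⟩
  · rintro ⟨m, rfl, hd⟩
    refine ⟨PresentedGroup.mk (GcRels c) (zword c) ^ m, ?_, hd, subDist_zpow c h m⟩
    rw [Hsub_eq c h]
    exact Subgroup.mem_zpowers_iff.2 ⟨m, rfl⟩

lemma npow_nat (d n : ℕ) : npow (d : ℝ) n = n ^ d := by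
  rw [npow, Real.rpow_natCast, ← Nat.cast_pow, Nat.ceil_natCast]

lemma stmt13_aux (c : ℕ) (hc : 1 ≤ c) :
    SimEq (distortion (GcRels c) (Bz c)) (npow ((c : ℝ) - 1)) ∧
    SimEq (fun n => sSup {k : ℕ | ∃ m : ℤ, m.natAbs = k ∧
        gDist (GcRels c) (PresentedGroup.mk (GcRels c) (zword c) ^ m) ≤ n})
      (npow (c : ℝ)) := by
  have h : 0 < c := hc
  have hnpow1 : npow ((c : ℝ) - 1) = fun n => n ^ (c - 1) := by
    have hcast : ((c : ℝ) - 1) = ((c - 1 : ℕ) : ℝ) := by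
      rw [Nat.cast_sub hc, Nat.cast_one]
    rw [hcast]
    funext n
    exact npow_nat (c - 1) n
  have hnpow2 : npow (c : ℝ) = fun n => n ^ c := by
    funext n
    exact npow_nat c n
  constructor
  · -- part 1
    constructor
    · -- distortion ⪯ n^(c-1)
      refine ⟨c + 1, 1, c, by omega, by omega, by omega, ?_⟩
      intro n
      rw [hnpow1, dist_eq c h n, one_mul]
      rcases Nat.eq_zero_or_pos n with hn0 | hn0
      · rw [hn0, Nat.div_zero]
        exact Nat.zero_le _
      · have key : (n + c) ^ c ≤ n * ((c + 1) * (n + c) ^ (c - 1)) := by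
          have e1 : (n + c) ^ c = (n + c) ^ (c - 1) * (n + c) := by
            rw [← pow_succ, Nat.sub_add_cancel hc]
          rw [e1]
          have e2 : n + c ≤ n * (c + 1) := by nlinarith
          calc (n + c) ^ (c - 1) * (n + c) ≤ (n + c) ^ (c - 1) * (n * (c + 1)) :=
              Nat.mul_le_mul_left _ e2
            _ = n * ((c + 1) * (n + c) ^ (c - 1)) := by ring
        calc f2 c n / n ≤ (n + c) ^ c / n := Nat.div_le_div_right (f2_le c h n)
          _ ≤ (n * ((c + 1) * (n + c) ^ (c - 1))) / n := Nat.div_le_div_right key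
          _ = (c + 1) * (n + c) ^ (c - 1) := Nat.mul_div_cancel_left _ hn0
    · -- n^(c-1) ⪯ distortion
      refine ⟨2 * (4 ^ c + 1), 4 ^ c, 1, Nat.mul_pos (by omega) (Nat.succ_pos _),
        Nat.pow_pos (by omega), by omega, ?_⟩
      intro n
      rw [hnpow1, dist_eq c h (4 ^ c * n + 1)]
      set M := 4 ^ c * n + 1 with hM
      have hMpos : 0 < M := by omega
      set D := f2 c M / M with hD
      have hD1 : 1 ≤ D := by
        rw [hD, Nat.le_div_iff_mul_le hMpos, one_mul]
        exact f2_ge_self c h M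
      set q := n ^ c / M with hq
      have hqD : q ≤ D := by
        rw [hD, Nat.le_div_iff_mul_le hMpos]
        calc q * M ≤ n ^ c := Nat.div_mul_le_self _ _
          _ ≤ f2 c M := f2_lower c h n
      rcases Nat.eq_zero_or_pos n with hn0 | hn0
      · rw [hn0]
        have : (0 : ℕ) ^ (c - 1) ≤ 1 := by
          rcases Nat.eq_zero_or_pos (c - 1) with hcc | hcc
          · rw [hcc, pow_zero]
          · rw [Nat.zero_pow (by omega)]; omega
        calc (0 : ℕ) ^ (c - 1) ≤ 1 := this
          _ ≤ 2 * (4 ^ c + 1) * D := by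
            have : 1 ≤ 2 * (4 ^ c + 1) := Nat.mul_pos (by omega) (Nat.succ_pos _)
            calc (1 : ℕ) ≤ 1 * 1 := by omega
              _ ≤ 2 * (4 ^ c + 1) * D := Nat.mul_le_mul this hD1
      · have e1 : n ^ c = n * n ^ (c - 1) := by
          rw [← pow_succ', Nat.sub_add_cancel hc]
        by_cases hcase : n ^ c < M
        · -- small case: n^(c-1) ≤ 4^c
          have h1 : n * n ^ (c - 1) ≤ n * 4 ^ c := by
            rw [← e1]
            calc n ^ c ≤ 4 ^ c * n := by omega
              _ = n * 4 ^ c := by ring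
          have h2 : n ^ (c - 1) ≤ 4 ^ c := Nat.le_of_mul_le_mul_left h1 hn0
          calc n ^ (c - 1) ≤ 4 ^ c := h2
            _ ≤ 2 * (4 ^ c + 1) * 1 := by omega
            _ ≤ 2 * (4 ^ c + 1) * D := Nat.mul_le_mul_left _ hD1
        · -- main case
          have hq1 : 1 ≤ q := by
            rw [hq, Nat.le_div_iff_mul_le hMpos, one_mul]
            omega
          have hdm : n ^ c = M * q + n ^ c % M := by
            rw [hq]
            exact (Nat.div_add_mod _ _).symm
          have hmod := Nat.mod_lt (n ^ c) hMpos
          have hMn : M ≤ (4 ^ c + 1) * n := by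
            rw [hM]
            nlinarith
          have key : n * n ^ (c - 1) ≤ n * (2 * (4 ^ c + 1) * q) := by
            rw [← e1]
            calc n ^ c = M * q + n ^ c % M := hdm
              _ ≤ M * q + M := by omega
              _ ≤ M * q + M * q := by
                  have hMq : M ≤ M * q := Nat.le_mul_of_pos_right M hq1
                  omega
              _ = 2 * q * M := by ring
              _ ≤ 2 * q * ((4 ^ c + 1) * n) := Nat.mul_le_mul_left _ hMn
              _ = n * (2 * (4 ^ c + 1) * q) := by ring
          have := Nat.le_of_mul_le_mul_left key hn0
          calc n ^ (c - 1) ≤ 2 * (4 ^ c + 1) * q := this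
            _ ≤ 2 * (4 ^ c + 1) * D := Nat.mul_le_mul_left _ hqD
  · -- part 2
    constructor
    · refine ⟨1, 1, c, by omega, by omega, by omega, ?_⟩
      intro n
      rw [hnpow2, one_mul, one_mul]
      exact f2_le c h n
    · refine ⟨1, 4 ^ c, 1, by omega, by positivity, by omega, ?_⟩
      intro n
      rw [hnpow2, one_mul]
      exact f2_lower c h n

end Stmt13Aux

theorem stmt13 (c : ℕ) (hc : 1 ≤ c) :
    SimEq (distortion (GcRels c) (Bz c)) (npow ((c : ℝ) - 1)) ∧
    SimEq (fun n => sSup {k : ℕ | ∃ m : ℤ, m.natAbs = k ∧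
        gDist (GcRels c) (PresentedGroup.mk (GcRels c) (zword c) ^ m) ≤ n})
      (npow (c : ℝ)) :=
  Stmt13Aux.stmt13_aux c hc
end

section
/- Let ⟨𝒜, 𝒜′ ∣ ℛ, ℛ′, [a, a′] = 1 ∀ a ∈ 𝒜 ∀ a′ ∈ 𝒜′⟩ be the cartesian product of the presentations ⟨𝒜 ∣ ℛ⟩ and ⟨𝒜′ ∣ ℛ′⟩, and let w be a null-homotopic word for the product presentation. Let w_1 be the word obtained from w by deleting all occurrences of letters in 𝒜′^{±1} and w_2 the word obtained by deleting all occurrences of letters in 𝒜^{±1}. Then w_1 is null-homotopic for ⟨𝒜 ∣ ℛ⟩, w_2 is null-homotopic for ⟨𝒜′ ∣ ℛ′⟩, and diam(w) ≤ max{|w_1|, |w_2|, diam(w_1), diam(w_2)}. -/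
/-! # Common definitions: words, presentations, area, Dehn functions,
isodiametric functions, word metrics and distortion. -/

open scoped commutatorElement

set_option linter.unusedSectionVars false

namespace Stmt17

def conjF {G : Type*} [Group G] (e : G × G) : G := e.1⁻¹ * e.2 * e.1

lemma exists_entries_of_mem_normalClosure {G : Type*} [Group G] {s : Set G} {w : G}
    (h : w ∈ Subgroup.normalClosure s) :
    ∃ entries : List (G × G), (∀ e ∈ entries, e.2 ∈ s ∨ e.2⁻¹ ∈ s) ∧
      w = (entries.map conjF).prod := by
  refine Subgroup.closure_induction
    (p := fun x _ => ∃ entries : List (G × G), (∀ e ∈ entries, e.2 ∈ s ∨ e.2⁻¹ ∈ s) ∧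
      x = (entries.map conjF).prod) ?_ ?_ ?_ ?_ h
  · intro x hx
    rcases Group.mem_conjugatesOfSet_iff.1 hx with ⟨r, hr, hc⟩
    rcases isConj_iff.1 hc with ⟨c, hcx⟩
    exact ⟨[(c⁻¹, r)], by simp [hr], by simp [conjF, ← hcx]⟩
  · exact ⟨[], by simp, by simp⟩
  · rintro x y _ _ ⟨ex, hex, rfl⟩ ⟨ey, hey, rfl⟩
    refine ⟨ex ++ ey, ?_, by simp⟩
    intro e he
    rcases List.mem_append.1 he with h' | h'
    exacts [hex e h', hey e h']
  · rintro x _ ⟨ex, hex, rfl⟩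
    refine ⟨(ex.map fun e => (e.1, e.2⁻¹)).reverse, ?_, ?_⟩
    · intro e he
      simp only [List.mem_reverse, List.mem_map] at he
      rcases he with ⟨e', he', rfl⟩
      rcases hex e' he' with h' | h'
      · exact Or.inr (by simpa using h')
      · exact Or.inl (by simpa using h')
    · rw [List.prod_inv_reverse]
      congr 1
      rw [List.map_reverse, List.map_map, List.map_map]
      refine congrArg List.reverse (List.map_congr_left ?_)
      intro e _
      simp [conjF, mul_assoc]

lemma ofFn_conj_get {G : Type*} [Group G] (entries : List (G × G)) :
    (List.ofFn fun i => ((entries.get i).1)⁻¹ * (entries.get i).2 * (entries.get i).1)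
      = entries.map conjF := by
  rw [show (fun i => ((entries.get i).1)⁻¹ * (entries.get i).2 * (entries.get i).1)
      = conjF ∘ entries.get from rfl, ← List.map_ofFn, List.ofFn_get]

lemma list_norm_bound {G : Type*} (f : G → ℕ) (l : List G) : ∃ D, ∀ e ∈ l, f e ≤ D := by
  induction l with
  | nil => exact ⟨0, by simp⟩
  | cons h t ih =>
      obtain ⟨D, hD⟩ := ih
      refine ⟨max (f h) D, ?_⟩
      intro e he
      rcases List.mem_cons.1 he with rfl | he
      · exact le_max_left _ _
      · exact le_trans (hD e he) (le_max_right _ _)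


section DiamAux

variable {B : Type} [DecidableEq B] {R : Set (FreeGroup B)} {v : FreeGroup B}

lemma mem_diam_set {D : ℕ} (entries : List (FreeGroup B × FreeGroup B))
    (hmem : ∀ e ∈ entries, (e.2 ∈ R ∨ e.2⁻¹ ∈ R) ∧ e.1.norm ≤ D)
    (hp : v = (entries.map conjF).prod) :
    ∃ (N : ℕ) (g r : Fin N → FreeGroup B), (∀ i, r i ∈ R ∨ (r i)⁻¹ ∈ R) ∧
      v = (List.ofFn fun i => (g i)⁻¹ * r i * g i).prod ∧ ∀ i, (g i).norm ≤ D := by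
  refine ⟨entries.length, fun i => (entries.get i).1, fun i => (entries.get i).2,
    fun i => (hmem _ (entries.get_mem i)).1, ?_,
    fun i => (hmem _ (entries.get_mem i)).2⟩
  rw [hp, ofFn_conj_get]

lemma diamOf_le {D : ℕ} (entries : List (FreeGroup B × FreeGroup B))
    (hmem : ∀ e ∈ entries, (e.2 ∈ R ∨ e.2⁻¹ ∈ R) ∧ e.1.norm ≤ D)
    (hp : v = (entries.map conjF).prod) : diamOf R v ≤ D :=
  Nat.sInf_le (mem_diam_set entries hmem hp)

lemma exists_min_entries (h : NullHomotopic R v) :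
    ∃ entries : List (FreeGroup B × FreeGroup B),
      (∀ e ∈ entries, (e.2 ∈ R ∨ e.2⁻¹ ∈ R) ∧ e.1.norm ≤ diamOf R v) ∧
      v = (entries.map conjF).prod := by
  obtain ⟨ent0, hm0, hp0⟩ := exists_entries_of_mem_normalClosure h
  obtain ⟨D0, hD0⟩ := list_norm_bound (fun e : FreeGroup B × FreeGroup B => e.1.norm) ent0
  have hne : {D : ℕ | ∃ (N : ℕ) (g r : Fin N → FreeGroup B),
      (∀ i, r i ∈ R ∨ (r i)⁻¹ ∈ R) ∧
      v = (List.ofFn fun i => (g i)⁻¹ * r i * g i).prod ∧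
      ∀ i, (g i).norm ≤ D}.Nonempty :=
    ⟨D0, mem_diam_set ent0 (fun e he => ⟨hm0 e he, hD0 e he⟩) hp0⟩
  obtain ⟨N, g, r, h1, h2, h3⟩ := Nat.sInf_mem hne
  refine ⟨List.ofFn fun i => (g i, r i), ?_, ?_⟩
  · intro e he
    rw [List.mem_ofFn] at he
    obtain ⟨i, rfl⟩ := he
    exact ⟨h1 i, h3 i⟩
  · rw [h2]
    congr 1
    rw [List.map_ofFn]
    rfl

end DiamAux

section Letters

variable {A A' : Type} [DecidableEq A] [DecidableEq A']

lemma mk_cons {α : Type*} (h : α × Bool) (t : List (α × Bool)) :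
    FreeGroup.mk (h :: t) = FreeGroup.mk [h] * FreeGroup.mk t := by
  rw [FreeGroup.mul_mk]
  rfl

lemma mk_single {α : Type*} (s : α) (b : Bool) :
    FreeGroup.mk [(s, b)] = cond b (FreeGroup.of s) (FreeGroup.of s)⁻¹ := by
  cases b
  · simp [FreeGroup.of, FreeGroup.inv_mk, FreeGroup.invRev]
  · rfl

lemma mk_single_not {α : Type*} (s : α) (b : Bool) :
    FreeGroup.mk [(s, !b)] = (FreeGroup.mk [(s, b)])⁻¹ := by
  cases b <;> simp [mk_single]

lemma norm_map_le {α β : Type*} [DecidableEq α] [DecidableEq β] (f : α → β) (x : FreeGroup α) :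
    (FreeGroup.map f x).norm ≤ x.norm := by
  conv_lhs => rw [← FreeGroup.mk_toWord (x := x), FreeGroup.map.mk]
  exact le_trans FreeGroup.norm_mk_le (by simp [FreeGroup.norm])

lemma projL_map_inl (z : FreeGroup A) :
    projL (A := A) (A' := A') (FreeGroup.map Sum.inl z) = z := by
  have h : ((projL (A := A) (A' := A')).comp (FreeGroup.map Sum.inl)) = MonoidHom.id _ :=
    FreeGroup.ext_hom _ _ fun a => by
      simp [projL, FreeGroup.map.of, FreeGroup.lift_apply_of]
  exact DFunLike.congr_fun h z

lemma projL_map_inr (z : FreeGroup A') :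
    projL (A := A) (A' := A') (FreeGroup.map Sum.inr z) = 1 := by
  have h : ((projL (A := A) (A' := A')).comp (FreeGroup.map Sum.inr)) = 1 :=
    FreeGroup.ext_hom _ _ fun a => by
      simp [projL, FreeGroup.map.of, FreeGroup.lift_apply_of]
  exact DFunLike.congr_fun h z

lemma projR_map_inr (z : FreeGroup A') :
    projR (A := A) (A' := A') (FreeGroup.map Sum.inr z) = z := by
  have h : ((projR (A := A) (A' := A')).comp (FreeGroup.map Sum.inr)) = MonoidHom.id _ :=
    FreeGroup.ext_hom _ _ fun a => by
      simp [projR, FreeGroup.map.of, FreeGroup.lift_apply_of]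
  exact DFunLike.congr_fun h z

lemma projR_map_inl (z : FreeGroup A) :
    projR (A := A) (A' := A') (FreeGroup.map Sum.inl z) = 1 := by
  have h : ((projR (A := A) (A' := A')).comp (FreeGroup.map Sum.inl)) = 1 :=
    FreeGroup.ext_hom _ _ fun a => by
      simp [projR, FreeGroup.map.of, FreeGroup.lift_apply_of]
  exact DFunLike.congr_fun h z

lemma projL_of_inl (a : A) :
    projL (A := A) (A' := A') (FreeGroup.of (Sum.inl a)) = FreeGroup.of a := by
  simp [projL, FreeGroup.lift_apply_of]

lemma projL_of_inr (a : A') :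
    projL (A := A) (A' := A') (FreeGroup.of (Sum.inr a)) = 1 := by
  simp [projL, FreeGroup.lift_apply_of]

lemma projR_of_inl (a : A) :
    projR (A := A) (A' := A') (FreeGroup.of (Sum.inl a)) = 1 := by
  simp [projR, FreeGroup.lift_apply_of]

lemma projR_of_inr (a : A') :
    projR (A := A) (A' := A') (FreeGroup.of (Sum.inr a)) = FreeGroup.of a := by
  simp [projR, FreeGroup.lift_apply_of]

lemma map_inl_projL (L : List ((A ⊕ A') × Bool)) :
    FreeGroup.map Sum.inl (projL (A := A) (A' := A') (FreeGroup.mk L))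
      = FreeGroup.mk (L.filter fun p => p.1.isLeft) := by
  induction L with
  | nil =>
      simp [← FreeGroup.one_eq_mk]
  | cons h t ih =>
      rcases h with ⟨s, b⟩
      rw [mk_cons, map_mul, map_mul]
      cases s with
      | inl a =>
          have h1 : projL (A := A) (A' := A') (FreeGroup.mk [(Sum.inl a, b)])
              = FreeGroup.mk [(a, b)] := by
            cases b <;> simp [mk_single, projL_of_inl]
          rw [h1, ih]
          have h2 : FreeGroup.map Sum.inl (FreeGroup.mk [(a, b)])
              = FreeGroup.mk [((Sum.inl a : A ⊕ A'), b)] := by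
            rw [FreeGroup.map.mk]
            rfl
          rw [h2, List.filter_cons, ← mk_cons]
          simp
      | inr a =>
          have h1 : projL (A := A) (A' := A') (FreeGroup.mk [(Sum.inr a, b)]) = 1 := by
            cases b <;> simp [mk_single, projL_of_inr]
          rw [h1, ih, List.filter_cons]
          simp

lemma map_inr_projR (L : List ((A ⊕ A') × Bool)) :
    FreeGroup.map Sum.inr (projR (A := A) (A' := A') (FreeGroup.mk L))
      = FreeGroup.mk (L.filter fun p => p.1.isRight) := by
  induction L with
  | nil =>
      simp [← FreeGroup.one_eq_mk]
  | cons h t ih =>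
      rcases h with ⟨s, b⟩
      rw [mk_cons, map_mul, map_mul]
      cases s with
      | inr a =>
          have h1 : projR (A := A) (A' := A') (FreeGroup.mk [(Sum.inr a, b)])
              = FreeGroup.mk [(a, b)] := by
            cases b <;> simp [mk_single, projR_of_inr]
          rw [h1, ih]
          have h2 : FreeGroup.map Sum.inr (FreeGroup.mk [(a, b)])
              = FreeGroup.mk [((Sum.inr a : A ⊕ A'), b)] := by
            rw [FreeGroup.map.mk]
            rfl
          rw [h2, List.filter_cons, ← mk_cons]
          simp
      | inl a =>
          have h1 : projR (A := A) (A' := A') (FreeGroup.mk [(Sum.inl a, b)]) = 1 := by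
            cases b <;> simp [mk_single, projR_of_inl]
          rw [h1, ih, List.filter_cons]
          simp

lemma length_filter_left_right (L : List ((A ⊕ A') × Bool)) :
    (L.filter fun p => p.1.isLeft).length + (L.filter fun p => p.1.isRight).length
      = L.length := by
  induction L with
  | nil => rfl
  | cons h t ih =>
      rcases h with ⟨s, b⟩
      cases s <;> simp [List.filter_cons] <;> omega

end Letters

section Shuffle

variable {A A' : Type} [DecidableEq A] [DecidableEq A']

def CommSet (A A' : Type) : Set (FreeGroup (A ⊕ A')) :=
  {r | ∃ (x : A) (y : A'), r = ⁅FreeGroup.of (Sum.inl x : A ⊕ A'), FreeGroup.of (Sum.inr y)⁆}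

/-- cost of the extra letters needed to normalize a commutator of signed letters -/
def fcost (e d : Bool) : ℕ := (cond e 0 1) + (cond d 0 1)

lemma comm_decomp (x : A) (y : A') (e d : Bool) :
    ∃ c rr : FreeGroup (A ⊕ A'),
      (rr ∈ CommSet A A' ∨ rr⁻¹ ∈ CommSet A A') ∧
      FreeGroup.mk [(Sum.inr y, d)] * FreeGroup.mk [(Sum.inl x, e)] *
        (FreeGroup.mk [(Sum.inr y, d)])⁻¹ * (FreeGroup.mk [(Sum.inl x, e)])⁻¹
        = c⁻¹ * rr * c ∧
      c.norm ≤ fcost e d := by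
  set X : FreeGroup (A ⊕ A') := FreeGroup.of (Sum.inl x) with hX
  set Y : FreeGroup (A ⊕ A') := FreeGroup.of (Sum.inr y) with hY
  have hmem : ⁅X, Y⁆ ∈ CommSet A A' := ⟨x, y, rfl⟩
  have hmem' : (⁅X, Y⁆⁻¹)⁻¹ ∈ CommSet A A' := by simpa using hmem
  cases e <;> cases d <;> simp only [mk_single, cond]
  · -- e = false, d = false
    refine ⟨X * Y, ⁅X, Y⁆⁻¹, Or.inr hmem', ?_, ?_⟩
    · simp only [commutatorElement_def, hX, hY]
      group
    · calc (X * Y).norm ≤ X.norm + Y.norm := FreeGroup.norm_mul_le _ _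
        _ ≤ 2 := by simp [hX, hY, FreeGroup.norm_of]
  · -- e = false, d = true
    refine ⟨X, ⁅X, Y⁆, Or.inl hmem, ?_, ?_⟩
    · simp only [commutatorElement_def, hX, hY]
      group
    · simp [hX, FreeGroup.norm_of, fcost]
  · -- e = true, d = false
    refine ⟨Y, ⁅X, Y⁆, Or.inl hmem, ?_, ?_⟩
    · simp only [commutatorElement_def, hX, hY]
      group
    · simp [hY, FreeGroup.norm_of, fcost]
  · -- e = true, d = true
    refine ⟨1, ⁅X, Y⁆⁻¹, Or.inr hmem', ?_, ?_⟩
    · simp only [commutatorElement_def, hX, hY]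
      group
    · simp [fcost]

lemma fcost_add_not (e d : Bool) : fcost e d + fcost (!e) (!d) = 2 := by
  cases e <;> cases d <;> rfl

/-- the number of inversions -/
def muFn : List ((A ⊕ A') × Bool) → ℕ
  | [] => 0
  | h :: t => (if h.1.isRight then t.countP (fun p => p.1.isLeft) else 0) + muFn t

lemma muFn_zero_split {l : List ((A ⊕ A') × Bool)} (h : muFn l = 0) :
    l = (l.filter fun p => p.1.isLeft) ++ (l.filter fun p => p.1.isRight) := by
  induction l with
  | nil => rfl
  | cons hd t ih =>
      rcases hd with ⟨s, b⟩
      cases s with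
      | inl a =>
          have h' : muFn t = 0 := by simpa [muFn] using h
          simpa [List.filter_cons] using congrArg (List.cons (Sum.inl a, b)) (ih h')
      | inr a =>
          rw [show muFn ((Sum.inr a, b) :: t)
              = t.countP (fun p => p.1.isLeft) + muFn t by simp [muFn]] at h
          have h1 : t.countP (fun p => p.1.isLeft) = 0 := by omega
          have h2 : muFn t = 0 := by omega
          have hfl : t.filter (fun p => p.1.isLeft) = [] := by
            rw [List.filter_eq_nil_iff]
            intro p hp
            simpa using List.countP_eq_zero.1 h1 p hp
          have hfr : t.filter (fun p => p.1.isRight) = t := by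
            rw [List.filter_eq_self]
            intro p hp
            have h3 := List.countP_eq_zero.1 h1 p hp
            rcases p with ⟨sp, bp⟩
            cases sp with
            | inl a' => simp at h3
            | inr a' => simp
          simp [List.filter_cons, hfl, hfr]

lemma muFn_pos_adj {l : List ((A ⊕ A') × Bool)} (h : muFn l ≠ 0) :
    ∃ (P : List ((A ⊕ A') × Bool)) (y : A') (d : Bool) (x : A) (e : Bool)
      (S : List ((A ⊕ A') × Bool)),
      l = P ++ (Sum.inr y, d) :: (Sum.inl x, e) :: S := by
  induction l with
  | nil => simp [muFn] at h
  | cons hd t ih =>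
      rcases hd with ⟨s, b⟩
      cases s with
      | inl a =>
          have h' : muFn t ≠ 0 := by simpa [muFn] using h
          obtain ⟨P, y, d, x, e, S, rfl⟩ := ih h'
          exact ⟨(Sum.inl a, b) :: P, y, d, x, e, S, rfl⟩
      | inr a =>
          cases t with
          | nil => simp [muFn] at h
          | cons hd2 t2 =>
              rcases hd2 with ⟨s2, b2⟩
              cases s2 with
              | inl x => exact ⟨[], a, b, x, b2, t2, rfl⟩
              | inr a2 =>
                  have h' : muFn ((Sum.inr a2, b2) :: t2) ≠ 0 := by
                    intro h0
                    apply h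
                    have hc : t2.countP (fun p => p.1.isLeft) = 0 ∧ muFn t2 = 0 := by
                      rw [show muFn ((Sum.inr a2, b2) :: t2)
                          = t2.countP (fun p => p.1.isLeft) + muFn t2 by simp [muFn]] at h0
                      omega
                    simp [muFn, List.countP_cons, hc.1, hc.2]
                  obtain ⟨P, y, d, x, e, S, hP⟩ := ih h'
                  exact ⟨(Sum.inr a, b) :: P, y, d, x, e, S, by rw [hP, List.cons_append]⟩

lemma muFn_swap_lt (P S : List ((A ⊕ A') × Bool)) (x : A) (e : Bool) (y : A') (d : Bool) :
    muFn (P ++ (Sum.inl x, e) :: (Sum.inr y, d) :: S)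
      < muFn (P ++ (Sum.inr y, d) :: (Sum.inl x, e) :: S) := by
  induction P with
  | nil =>
      simp [muFn, List.countP_cons]
  | cons hd P ih =>
      rcases hd with ⟨s, b⟩
      have hcount : ∀ (u v : (A ⊕ A') × Bool),
          (P ++ u :: v :: S).countP (fun p => p.1.isLeft)
            = (P.countP fun p => p.1.isLeft)
              + ((if u.1.isLeft then 1 else 0) + ((if v.1.isLeft then 1 else 0)
              + S.countP (fun p => p.1.isLeft))) := by
        intro u v
        simp [List.countP_append, List.countP_cons]
        omega
      cases s with
      | inl a =>
          simpa [muFn] using ih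
      | inr a =>
          have e1 := hcount (Sum.inl x, e) (Sum.inr y, d)
          have e2 := hcount (Sum.inr y, d) (Sum.inl x, e)
          simp only [Sum.isLeft_inl, Sum.isLeft_inr, if_true, if_false] at e1 e2
          have hih := ih
          simp only [List.cons_append, muFn, Sum.isRight_inr, if_true, List.append_eq]
          rw [e1, e2]
          omega

lemma shuffle_zero {l : List ((A ⊕ A') × Bool)} (h0 : muFn l = 0) :
    FreeGroup.mk l = FreeGroup.mk (l.filter fun p => p.1.isLeft)
      * FreeGroup.mk (l.filter fun p => p.1.isRight) := by
  conv_lhs => rw [muFn_zero_split h0]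
  rw [FreeGroup.mul_mk]

lemma shuffle (m : ℕ) :
    ∀ l : List ((A ⊕ A') × Bool), muFn l ≤ m →
    ∃ ent1 ent2 : List (FreeGroup (A ⊕ A') × FreeGroup (A ⊕ A')),
      (∀ e' ∈ ent1 ++ ent2,
        (e'.2 ∈ CommSet A A' ∨ e'.2⁻¹ ∈ CommSet A A') ∧ e'.1.norm ≤ l.length / 2) ∧
      FreeGroup.mk l =
        (ent1.map conjF).prod *
          (FreeGroup.mk (l.filter fun p => p.1.isLeft) *
            FreeGroup.mk (l.filter fun p => p.1.isRight)) *
        (ent2.map conjF).prod := by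
  induction m with
  | zero =>
      intro l hl
      exact ⟨[], [], by simp, by simpa using shuffle_zero (Nat.le_zero.1 hl)⟩
  | succ m ih =>
      intro l hl
      by_cases h0 : muFn l = 0
      · exact ⟨[], [], by simp, by simpa using shuffle_zero h0⟩
      obtain ⟨P, y, d, x, e, S, rfl⟩ := muFn_pos_adj h0
      set l' := P ++ (Sum.inl x, e) :: (Sum.inr y, d) :: S with hl'def
      have hswap := muFn_swap_lt P S x e y d
      have hml' : muFn l' ≤ m := by
        rw [hl'def]
        omega
      obtain ⟨ent1, ent2, hb, hmk⟩ := ih l' hml'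
      have hlenl : (P ++ (Sum.inr y, d) :: (Sum.inl x, e) :: S).length
          = P.length + S.length + 2 := by
        simp [hl'def]
        omega
      have hlen' : l'.length = P.length + S.length + 2 := by
        simp [hl'def]
        omega
      have hfL : l'.filter (fun p => p.1.isLeft)
          = (P ++ (Sum.inr y, d) :: (Sum.inl x, e) :: S).filter (fun p => p.1.isLeft) := by
        simp [hl'def, List.filter_append, List.filter_cons]
      have hfR : l'.filter (fun p => p.1.isRight)
          = (P ++ (Sum.inr y, d) :: (Sum.inl x, e) :: S).filter (fun p => p.1.isRight) := by
        simp [hl'def, List.filter_append, List.filter_cons]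
      rw [hfL, hfR] at hmk
      have hmkl : FreeGroup.mk (P ++ (Sum.inr y, d) :: (Sum.inl x, e) :: S)
          = FreeGroup.mk P * FreeGroup.mk [(Sum.inr y, d)] * FreeGroup.mk [(Sum.inl x, e)]
            * FreeGroup.mk S := by
        rw [FreeGroup.mul_mk, FreeGroup.mul_mk, FreeGroup.mul_mk]
        congr 1
        simp
      have hmkl' : FreeGroup.mk l'
          = FreeGroup.mk P * FreeGroup.mk [(Sum.inl x, e)] * FreeGroup.mk [(Sum.inr y, d)]
            * FreeGroup.mk S := by
        rw [hl'def, FreeGroup.mul_mk, FreeGroup.mul_mk, FreeGroup.mul_mk]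
        congr 1
        simp
      by_cases hside : P.length + fcost e d
          ≤ (P ++ (Sum.inr y, d) :: (Sum.inl x, e) :: S).length / 2
      · -- emit the commutator cell at the front
        obtain ⟨c, rr, hrrmem, hcomm, hcnorm⟩ := comm_decomp x y e d
        have hnorm : (c * (FreeGroup.mk P)⁻¹).norm ≤ fcost e d + P.length := by
          calc (c * (FreeGroup.mk P)⁻¹).norm
              ≤ c.norm + (FreeGroup.mk P)⁻¹.norm := FreeGroup.norm_mul_le _ _
            _ = c.norm + (FreeGroup.mk P).norm := by rw [FreeGroup.norm_inv_eq]
            _ ≤ fcost e d + P.length := add_le_add hcnorm FreeGroup.norm_mk_le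
        refine ⟨(c * (FreeGroup.mk P)⁻¹, rr) :: ent1, ent2, ?_, ?_⟩
        · intro e' he'
          rcases List.mem_append.1 he' with hc1 | hc2
          · rcases List.mem_cons.1 hc1 with rfl | hc1
            · refine ⟨hrrmem, ?_⟩
              show (c * (FreeGroup.mk P)⁻¹).norm ≤ _
              omega
            · have := hb e' (List.mem_append.2 (Or.inl hc1))
              rw [hlen'] at this
              rw [hlenl]
              exact this
          · have := hb e' (List.mem_append.2 (Or.inr hc2))
            rw [hlen'] at this
            rw [hlenl]
            exact this
        · have hrr : rr = c * (FreeGroup.mk [(Sum.inr y, d)] * FreeGroup.mk [(Sum.inl x, e)]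
              * (FreeGroup.mk [(Sum.inr y, d)])⁻¹ * (FreeGroup.mk [(Sum.inl x, e)])⁻¹) * c⁻¹ := by
            rw [hcomm]
            group
          have key : FreeGroup.mk (P ++ (Sum.inr y, d) :: (Sum.inl x, e) :: S)
              = conjF (c * (FreeGroup.mk P)⁻¹, rr) * FreeGroup.mk l' := by
            simp only [conjF]
            rw [hmkl, hmkl', hrr]
            group
          rw [key, hmk]
          simp only [List.map_cons, List.prod_cons, mul_assoc]
      · -- emit the commutator cell at the back
        have hside2 : S.length + fcost (!e) (!d)
            ≤ (P ++ (Sum.inr y, d) :: (Sum.inl x, e) :: S).length / 2 := by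
          have h2 := fcost_add_not e d
          rw [hlenl] at hside ⊢
          omega
        obtain ⟨c, rr, hrrmem, hcomm, hcnorm⟩ := comm_decomp x y (!e) (!d)
        rw [mk_single_not (Sum.inr y) d, mk_single_not (Sum.inl x) e] at hcomm
        have hnorm : (c * FreeGroup.mk S).norm ≤ fcost (!e) (!d) + S.length := by
          calc (c * FreeGroup.mk S).norm
              ≤ c.norm + (FreeGroup.mk S).norm := FreeGroup.norm_mul_le _ _
            _ ≤ fcost (!e) (!d) + S.length := add_le_add hcnorm FreeGroup.norm_mk_le
        refine ⟨ent1, ent2 ++ [(c * FreeGroup.mk S, rr)], ?_, ?_⟩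
        · intro e' he'
          rcases List.mem_append.1 he' with hc1 | hc2
          · have := hb e' (List.mem_append.2 (Or.inl hc1))
            rw [hlen'] at this
            rw [hlenl]
            exact this
          · rcases List.mem_append.1 hc2 with hc2 | hc2
            · have := hb e' (List.mem_append.2 (Or.inr hc2))
              rw [hlen'] at this
              rw [hlenl]
              exact this
            · rcases List.mem_singleton.1 hc2 with rfl
              refine ⟨hrrmem, ?_⟩
              show (c * FreeGroup.mk S).norm ≤ _
              omega
        · have hrr : rr = c * ((FreeGroup.mk [(Sum.inr y, d)])⁻¹ * (FreeGroup.mk [(Sum.inl x, e)])⁻¹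
              * (FreeGroup.mk [(Sum.inr y, d)])⁻¹⁻¹ * (FreeGroup.mk [(Sum.inl x, e)])⁻¹⁻¹) * c⁻¹ := by
            rw [hcomm]
            group
          have key : FreeGroup.mk (P ++ (Sum.inr y, d) :: (Sum.inl x, e) :: S)
              = FreeGroup.mk l' * conjF (c * FreeGroup.mk S, rr) := by
            simp only [conjF]
            rw [hmkl, hmkl', hrr]
            group
          rw [key, hmk]
          simp only [List.map_append, List.prod_append, List.map_cons, List.prod_cons,
            List.map_nil, List.prod_nil, mul_one, mul_assoc]

end Shuffle

end Stmt17


theorem stmt17 {A A' : Type} [DecidableEq A] [DecidableEq A']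
    (R : Set (FreeGroup A)) (R' : Set (FreeGroup A'))
    (w : FreeGroup (A ⊕ A')) (hw : NullHomotopic (ProdRels R R') w) :
    NullHomotopic R (projL w) ∧ NullHomotopic R' (projR w) ∧
    diamOf (ProdRels R R') w ≤
      max (max ((w.toWord.filter fun p => p.1.isLeft).length)
            ((w.toWord.filter fun p => p.1.isRight).length))
        (max (diamOf R (projL w)) (diamOf R' (projR w))) := by
  have hL : NullHomotopic R (projL w) := by
    have hle : Subgroup.normalClosure (ProdRels R R')
        ≤ (Subgroup.normalClosure R).comap (projL (A := A) (A' := A')) := by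
      apply Subgroup.normalClosure_le_normal
      rintro r hr
      rcases hr with (⟨r0, hr0, rfl⟩ | ⟨r0, hr0, rfl⟩) | ⟨x, y, rfl⟩
      · simp only [SetLike.mem_coe, Subgroup.mem_comap, Stmt17.projL_map_inl]
        exact Subgroup.subset_normalClosure hr0
      · simp only [SetLike.mem_coe, Subgroup.mem_comap, Stmt17.projL_map_inr]
        exact one_mem _
      · simp only [SetLike.mem_coe, Subgroup.mem_comap, map_commutatorElement,
          Stmt17.projL_of_inl, Stmt17.projL_of_inr, commutatorElement_one_right]
        exact one_mem _
    exact hle hw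
  have hR : NullHomotopic R' (projR w) := by
    have hle : Subgroup.normalClosure (ProdRels R R')
        ≤ (Subgroup.normalClosure R').comap (projR (A := A) (A' := A')) := by
      apply Subgroup.normalClosure_le_normal
      rintro r hr
      rcases hr with (⟨r0, hr0, rfl⟩ | ⟨r0, hr0, rfl⟩) | ⟨x, y, rfl⟩
      · simp only [SetLike.mem_coe, Subgroup.mem_comap, Stmt17.projR_map_inl]
        exact one_mem _
      · simp only [SetLike.mem_coe, Subgroup.mem_comap, Stmt17.projR_map_inr]
        exact Subgroup.subset_normalClosure hr0
      · simp only [SetLike.mem_coe, Subgroup.mem_comap, map_commutatorElement,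
          Stmt17.projR_of_inl, Stmt17.projR_of_inr, commutatorElement_one_left]
        exact one_mem _
    exact hle hw
  refine ⟨hL, hR, ?_⟩
  obtain ⟨entL, hentL, hprodL⟩ := Stmt17.exists_min_entries hL
  obtain ⟨entR, hentR, hprodR⟩ := Stmt17.exists_min_entries hR
  obtain ⟨ent1, ent2, hb, hmk⟩ := Stmt17.shuffle (Stmt17.muFn w.toWord) w.toWord le_rfl
  set M := max (max ((w.toWord.filter fun p => p.1.isLeft).length)
      ((w.toWord.filter fun p => p.1.isRight).length))
    (max (diamOf R (projL w)) (diamOf R' (projR w))) with hMdef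
  have hhalf : w.toWord.length / 2 ≤ M := by
    have hsum := Stmt17.length_filter_left_right w.toWord
    have h1 : (w.toWord.filter fun p => p.1.isLeft).length
        ≤ max ((w.toWord.filter fun p => p.1.isLeft).length)
          ((w.toWord.filter fun p => p.1.isRight).length) := le_max_left _ _
    have h2 : (w.toWord.filter fun p => p.1.isRight).length
        ≤ max ((w.toWord.filter fun p => p.1.isLeft).length)
          ((w.toWord.filter fun p => p.1.isRight).length) := le_max_right _ _
    have h3 : max ((w.toWord.filter fun p => p.1.isLeft).length)
        ((w.toWord.filter fun p => p.1.isRight).length) ≤ M := le_max_left _ _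
    omega
  have hD1 : diamOf R (projL w) ≤ M :=
    le_trans (le_max_left _ _) (le_max_right _ _)
  have hD2 : diamOf R' (projR w) ≤ M :=
    le_trans (le_max_right _ _) (le_max_right _ _)
  set eL := entL.map fun e => (FreeGroup.map Sum.inl e.1, FreeGroup.map Sum.inl e.2) with heL
  set eR := entR.map fun e => (FreeGroup.map Sum.inr e.1, FreeGroup.map Sum.inr e.2) with heR
  have hmapL : FreeGroup.mk (w.toWord.filter fun p => p.1.isLeft)
      = (eL.map Stmt17.conjF).prod := by
    rw [← Stmt17.map_inl_projL, FreeGroup.mk_toWord, hprodL, map_list_prod, heL,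
      List.map_map, List.map_map]
    congr 1
    apply List.map_congr_left
    intro e _
    simp [Stmt17.conjF]
  have hmapR : FreeGroup.mk (w.toWord.filter fun p => p.1.isRight)
      = (eR.map Stmt17.conjF).prod := by
    rw [← Stmt17.map_inr_projR, FreeGroup.mk_toWord, hprodR, map_list_prod, heR,
      List.map_map, List.map_map]
    congr 1
    apply List.map_congr_left
    intro e _
    simp [Stmt17.conjF]
  apply Stmt17.diamOf_le (ent1 ++ (eL ++ (eR ++ ent2)))
  · intro e' he'
    rcases List.mem_append.1 he' with hc | hc
    · obtain ⟨hcm, hcn⟩ := hb e' (List.mem_append.2 (Or.inl hc))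
      refine ⟨?_, le_trans hcn hhalf⟩
      rcases hcm with h | h
      · exact Or.inl (Set.mem_union_right _ h)
      · exact Or.inr (Set.mem_union_right _ h)
    rcases List.mem_append.1 hc with hc | hc
    · rcases List.mem_map.1 hc with ⟨e0, he0, rfl⟩
      obtain ⟨hr0, hn0⟩ := hentL e0 he0
      constructor
      · rcases hr0 with h | h
        · exact Or.inl (Set.mem_union_left _ (Set.mem_union_left _ ⟨e0.2, h, rfl⟩))
        · refine Or.inr (Set.mem_union_left _ (Set.mem_union_left _ ⟨e0.2⁻¹, h, ?_⟩))
          rw [map_inv]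
      · exact le_trans (le_trans (Stmt17.norm_map_le _ _) hn0) hD1
    rcases List.mem_append.1 hc with hc | hc
    · rcases List.mem_map.1 hc with ⟨e0, he0, rfl⟩
      obtain ⟨hr0, hn0⟩ := hentR e0 he0
      constructor
      · rcases hr0 with h | h
        · exact Or.inl (Set.mem_union_left _ (Set.mem_union_right _ ⟨e0.2, h, rfl⟩))
        · refine Or.inr (Set.mem_union_left _ (Set.mem_union_right _ ⟨e0.2⁻¹, h, ?_⟩))
          rw [map_inv]
      · exact le_trans (le_trans (Stmt17.norm_map_le _ _) hn0) hD2
    · obtain ⟨hcm, hcn⟩ := hb e' (List.mem_append.2 (Or.inr hc))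
      refine ⟨?_, le_trans hcn hhalf⟩
      rcases hcm with h | h
      · exact Or.inl (Set.mem_union_right _ h)
      · exact Or.inr (Set.mem_union_right _ h)
  · conv_lhs => rw [← FreeGroup.mk_toWord (x := w)]
    rw [hmk, hmapL, hmapR]
    simp only [List.map_append, List.prod_append, mul_assoc]
end
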